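/- arXiv:1908.00865 — 8 statements merged into one kernel-verified Lean document; each statement's English description precedes it below -/
import Mathlib

section
/- Let f, g : ℝⁿ → ℝ be convex and differentiable, let w : ℝⁿ → ℝ be differentiable, and let λ > 0. Let x ∈ ℝⁿ and suppose x̄ ∈ ℝⁿ satisfies x̄ + λ∇f(x̄) = x (i.e. x̄ = J_{λ∇f}(x)). Set z := (2x̄ − x) − λ∇w(x̄), and suppose z̄ ∈ ℝⁿ satisfies z̄ + λ∇g(z̄) = z (i.e. z̄ = J_{λ∇g}(z)). Then ∇f(x̄) + ∇g(x̄) + ∇w(x̄) = 0 if and only if x = ½x + ½(2z̄ − z) − ½λ∇w(x̄); equivalently, if and only if z̄ = x̄. (This says x is a fixed point of the operator P = ½I + ½C_{λ∇g}∘(C_{λ∇f} − λ∇w∘J_{λ∇f}) − ½λ∇w∘J_{λ∇f}, where C_{λ∇φ} = 2J_{λ∇φ} − I is the Cayley operator, if and only if J_{λ∇f}(x) is a zero of ∇f + ∇g + ∇w.) -/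
open InnerProductSpace in
/-- Monotonicity of the gradient of a convex differentiable function. -/
lemma grad_mono_aux {E : Type*} [NormedAddCommGroup E] [InnerProductSpace ℝ E]
    [CompleteSpace E] {g : E → ℝ}
    (hg : ConvexOn ℝ Set.univ g) (hgd : Differentiable ℝ g) (a b : E) :
    inner ℝ (gradient g a) (b - a) ≤ (inner ℝ (gradient g b) (b - a) : ℝ) := by
  set c : ℝ → E := fun t => AffineMap.lineMap a b t with hc
  have hderiv : ∀ t : ℝ, HasDerivAt (fun t => g (c t))
      (inner ℝ (gradient g (c t)) (b - a) : ℝ) t := by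
    intro t
    have hcd : HasDerivAt c (b - a) t := by
      simp only [hc, AffineMap.lineMap_apply_module]
      have h1 : HasDerivAt (fun t : ℝ => (1 - t) • a + t • b)
          ((-(1 : ℝ)) • a + (1 : ℝ) • b) t :=
        (((hasDerivAt_id t).const_sub (1 : ℝ)).smul_const a).add
          ((hasDerivAt_id t).smul_const b)
      simpa [neg_add_eq_sub] using h1
    have hgrad : HasFDerivAt g ((toDual ℝ E) (gradient g (c t))) (c t) :=
      (hasGradientAt_iff_hasFDerivAt).1 (hgd (c t)).hasGradientAt
    have h := hgrad.comp_hasDerivAt t hcd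
    simp [InnerProductSpace.toDual_apply_apply] at h ⊢
    exact h
  have hconv : ConvexOn ℝ Set.univ (fun t => g (c t)) := by
    have := hg.comp_affineMap (AffineMap.lineMap a b)
    exact this
  have hmono := hconv.monotoneOn_deriv (fun t _ => (hderiv t).differentiableAt)
  have h01 : deriv (fun t => g (c t)) 0 ≤ deriv (fun t => g (c t)) 1 := by
    apply hmono <;> simp [interior_univ]
  rw [(hderiv 0).deriv, (hderiv 1).deriv] at h01
  simpa [hc, AffineMap.lineMap_apply_zero, AffineMap.lineMap_apply_one] using h01

/-- Fixed points of the Davis-Yin operator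
`P = ½I + ½C_{λ∇g}∘(C_{λ∇f} − λ∇w∘J_{λ∇f}) − ½λ∇w∘J_{λ∇f}` correspond to zeros of
`∇f + ∇g + ∇w` at `x̄ = J_{λ∇f}(x)`; equivalently `z̄ = x̄`. -/
theorem stmt_2 {n : ℕ} (f g w : EuclideanSpace ℝ (Fin n) → ℝ)
    (hf : ConvexOn ℝ Set.univ f) (hg : ConvexOn ℝ Set.univ g)
    (hfd : Differentiable ℝ f) (hgd : Differentiable ℝ g) (hwd : Differentiable ℝ w)
    (lam : ℝ) (hlam : 0 < lam)
    (x xbar z zbar : EuclideanSpace ℝ (Fin n))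
    (hxbar : xbar + lam • gradient f xbar = x)
    (hz : z = ((2 : ℝ) • xbar - x) - lam • gradient w xbar)
    (hzbar : zbar + lam • gradient g zbar = z) :
    (gradient f xbar + gradient g xbar + gradient w xbar = 0 ↔
      x = (1 / 2 : ℝ) • x + (1 / 2 : ℝ) • ((2 : ℝ) • zbar - z)
        - ((1 / 2) * lam) • gradient w xbar) ∧
    (gradient f xbar + gradient g xbar + gradient w xbar = 0 ↔ zbar = xbar) := by
  set u := gradient f xbar
  set v := gradient w xbar
  have hz' : z = xbar - lam • u - lam • v := by
    rw [hz, ← hxbar]; module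
  have key : gradient f xbar + gradient g xbar + gradient w xbar = 0 ↔ zbar = xbar := by
    constructor
    · intro h
      have hgx : gradient g xbar = -u - v := by
        have : u + gradient g xbar + v = 0 := h
        linear_combination (norm := module) this
      have hx2 : xbar + lam • gradient g xbar = z := by
        rw [hgx, hz']; module
      -- uniqueness of the resolvent via monotonicity
      have hmono := grad_mono_aux hg hgd zbar xbar
      have hdiff : xbar - zbar = -(lam • (gradient g xbar - gradient g zbar)) := by
        have := hx2.trans hzbar.symm
        linear_combination (norm := module) this
      have hinner : (inner ℝ (gradient g xbar - gradient g zbar) (xbar - zbar) : ℝ) ≥ 0 := by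
        have := sub_nonneg.mpr hmono
        rw [← inner_sub_left] at this
        linarith
      set d := gradient g xbar - gradient g zbar with hd
      have : (inner ℝ d (xbar - zbar) : ℝ) = -lam * ‖d‖ ^ 2 := by
        rw [hdiff, inner_neg_right, real_inner_smul_right, real_inner_self_eq_norm_sq]
        ring
      have hd0 : ‖d‖ ^ 2 = 0 := by nlinarith
      have : xbar - zbar = 0 := by
        rw [hdiff, hd]
        have : d = 0 := by
          have := (norm_eq_zero).1 (pow_eq_zero_iff (n := 2) two_ne_zero |>.1 hd0)
          exact this
        rw [← hd, this, smul_zero, neg_zero]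
      have := sub_eq_zero.1 this
      exact this.symm
    · intro h
      subst h
      have : lam • gradient g zbar = -(lam • u) - lam • v := by
        have := hzbar.trans hz'
        linear_combination (norm := module) this
      have hgx : gradient g zbar = -u - v := by
        have h2 := congrArg (fun y => lam⁻¹ • y) this
        simpa [smul_smul, inv_mul_cancel₀ hlam.ne', smul_sub, smul_neg] using h2
      rw [hgx]; module
  refine ⟨?_, key⟩
  rw [key]
  constructor
  · intro h; subst h
    rw [hz', ← hxbar]; module
  · intro h
    have : (2:ℝ) • zbar - (2:ℝ) • xbar = 0 := by
      have h' := h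
      rw [hz'] at h'
      linear_combination (norm := module) (-2 : ℝ) • h' - hxbar
    have : zbar - xbar = 0 := by
      have h2 := congrArg (fun y => (2:ℝ)⁻¹ • y) this
      simpa [smul_sub, smul_smul] using h2
    exact sub_eq_zero.1 this
end

section
/- Let f, g : ℝⁿ → ℝ be convex and differentiable and let w : ℝⁿ → ℝ be differentiable with continuous gradient. Let λ > 0 and let J_f, J_g : ℝⁿ → ℝⁿ be functions satisfying J_f(u) + λ∇f(J_f(u)) = u and J_g(u) + λ∇g(J_g(u)) = u for every u ∈ ℝⁿ. Let γ_k ∈ [0,1] for all k, and let sequences (x_k), (x̂_k) in ℝⁿ satisfy, for all k ≥ 0, x̂_{k+1} = x_{k+1} + γ_{k+1}(x_{k+1} − x_k) and the accelerated Davis–Yin recursion x_{k+1} = x̂_k + J_g( 2J_f(x̂_k) − x̂_k − λ∇w(J_f(x̂_k)) ) − J_f(x̂_k). If x_k → x_∞ for some x_∞ ∈ ℝⁿ, then J_f(x̂_k) → x̄_∞ := J_f(x_∞) and ∇f(x̄_∞) + ∇g(x̄_∞) + ∇w(x̄_∞) = 0, i.e. x̄_∞ is a minimizer of f + g + w. 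-/
open Filter Topology InnerProductSpace

section Aux

variable {E : Type*} [NormedAddCommGroup E] [InnerProductSpace ℝ E] [CompleteSpace E]

/-- Monotonicity of the gradient of a convex differentiable function. -/
lemma grad_mono {f : E → ℝ} (hf : ConvexOn ℝ Set.univ f) (hfd : Differentiable ℝ f)
    (a b : E) : 0 ≤ ⟪gradient f a - gradient f b, a - b⟫_ℝ := by
  set c : ℝ → E := fun t => b + t • (a - b) with hc
  have hline : ∀ t : ℝ, HasDerivAt c (a - b) t := by
    intro t
    simpa [hc] using ((hasDerivAt_id t).smul_const (a - b)).const_add b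
  have hφ : ∀ t : ℝ, HasDerivAt (f ∘ c) ⟪gradient f (c t), a - b⟫_ℝ t := by
    intro t
    have h1 : HasFDerivAt f (toDual ℝ E (gradient f (c t))) (c t) :=
      (hfd (c t)).hasGradientAt
    simpa [toDual_apply_apply, real_inner_comm] using (h1.comp_hasDerivAt t (hline t))
  have hconv : ConvexOn ℝ Set.univ (f ∘ c) := by
    have haff : ConvexOn ℝ Set.univ (f ∘ (AffineMap.lineMap b a : ℝ →ᵃ[ℝ] E)) := by
      have := hf.comp_affineMap (AffineMap.lineMap b a : ℝ →ᵃ[ℝ] E)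
      simpa using this
    convert haff using 2
    ext t
    simp [hc, AffineMap.lineMap_apply, add_comm]
  have hmono := hconv.monotoneOn_deriv (fun t _ => ((hφ t).differentiableAt))
  have h01 : deriv (f ∘ c) 0 ≤ deriv (f ∘ c) 1 :=
    hmono (Set.mem_univ 0) (Set.mem_univ 1) zero_le_one
  rw [(hφ 0).deriv, (hφ 1).deriv] at h01
  have h0 : c 0 = b := by simp [hc]
  have h1 : c 1 = a := by simp [hc]
  rw [h0, h1] at h01
  have := sub_nonneg.mpr h01
  rwa [← inner_sub_left] at this

/-- The resolvent of the gradient of a convex differentiable function is nonexpansive. -/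
lemma resolvent_lip {f : E → ℝ} (hf : ConvexOn ℝ Set.univ f) (hfd : Differentiable ℝ f)
    {lam : ℝ} (hlam : 0 < lam) {J : E → E}
    (hJ : ∀ u, J u + lam • gradient f (J u) = u) : LipschitzWith 1 J := by
  refine LipschitzWith.of_dist_le_mul fun u v => ?_
  rw [dist_eq_norm, dist_eq_norm, NNReal.coe_one, one_mul]
  set a := J u
  set b := J v
  set p := gradient f a - gradient f b with hp
  have key : u - v = (a - b) + lam • p := by
    have h1 := hJ u
    have h2 := hJ v
    rw [hp, ← h1, ← h2]
    module
  have hin : 0 ≤ ⟪a - b, p⟫_ℝ := by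
    rw [real_inner_comm]
    exact grad_mono hf hfd a b
  have hsq : ‖a - b‖ ^ 2 ≤ ‖u - v‖ ^ 2 := by
    rw [key, norm_add_sq_real]
    have h3 : ⟪a - b, lam • p⟫_ℝ = lam * ⟪a - b, p⟫_ℝ := real_inner_smul_right _ _ _
    nlinarith [norm_nonneg (lam • p), sq_nonneg ‖lam • p‖]
  exact (pow_le_pow_iff_left₀ (norm_nonneg _) (norm_nonneg _) two_ne_zero).mp hsq

end Aux

/-- If the iterates of the accelerated Davis-Yin method converge to `x_∞`,
then `J_f(x̂_k) → J_f(x_∞)` and `J_f(x_∞)` is a zero of `∇f + ∇g + ∇w`. -/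
theorem stmt_3 {n : ℕ} (f g w : EuclideanSpace ℝ (Fin n) → ℝ)
    (hf : ConvexOn ℝ Set.univ f) (hg : ConvexOn ℝ Set.univ g)
    (hfd : Differentiable ℝ f) (hgd : Differentiable ℝ g)
    (hwd : Differentiable ℝ w) (hwc : Continuous (gradient w))
    (lam : ℝ) (hlam : 0 < lam)
    (Jf Jg : EuclideanSpace ℝ (Fin n) → EuclideanSpace ℝ (Fin n))
    (hJf : ∀ u, Jf u + lam • gradient f (Jf u) = u)
    (hJg : ∀ u, Jg u + lam • gradient g (Jg u) = u)
    (γ : ℕ → ℝ) (hγ : ∀ k, γ k ∈ Set.Icc (0 : ℝ) 1)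
    (x xhat : ℕ → EuclideanSpace ℝ (Fin n))
    (hxhat : ∀ k, xhat (k + 1) = x (k + 1) + γ (k + 1) • (x (k + 1) - x k))
    (hrec : ∀ k, x (k + 1) =
      xhat k + Jg ((2 : ℝ) • Jf (xhat k) - xhat k - lam • gradient w (Jf (xhat k)))
        - Jf (xhat k))
    (xinf : EuclideanSpace ℝ (Fin n))
    (hconv : Filter.Tendsto x Filter.atTop (nhds xinf)) :
    Filter.Tendsto (fun k => Jf (xhat k)) Filter.atTop (nhds (Jf xinf)) ∧
    gradient f (Jf xinf) + gradient g (Jf xinf) + gradient w (Jf xinf) = 0 := by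
  have hJfLip := resolvent_lip hf hfd hlam hJf
  have hJgLip := resolvent_lip hg hgd hlam hJg
  -- x (k+1) → xinf
  have hx1 : Tendsto (fun k => x (k + 1)) atTop (nhds xinf) :=
    hconv.comp (tendsto_add_atTop_nat 1)
  -- differences tend to 0
  have hd : Tendsto (fun k => x (k + 1) - x k) atTop (nhds 0) := by
    simpa using hx1.sub hconv
  -- momentum term tends to 0
  have hsm : Tendsto (fun k => γ (k + 1) • (x (k + 1) - x k)) atTop (nhds 0) := by
    apply squeeze_zero_norm (a := fun k => ‖x (k + 1) - x k‖)
    · intro k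
      rw [norm_smul]
      have h1 := (hγ (k + 1)).1
      have h2 := (hγ (k + 1)).2
      calc ‖γ (k + 1)‖ * ‖x (k + 1) - x k‖
          ≤ 1 * ‖x (k + 1) - x k‖ := by
            apply mul_le_mul_of_nonneg_right _ (norm_nonneg _)
            rw [Real.norm_eq_abs, abs_of_nonneg h1]; exact h2
        _ = ‖x (k + 1) - x k‖ := one_mul _
    · simpa using hd.norm
  -- xhat → xinf
  have hxh1 : Tendsto (fun k => xhat (k + 1)) atTop (nhds xinf) := by
    have := hx1.add hsm
    rw [add_zero] at this
    simpa [← hxhat] using this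
  have hxh : Tendsto xhat atTop (nhds xinf) := by
    rw [← tendsto_add_atTop_iff_nat 1]
    exact hxh1
  -- Jf (xhat k) → Jf xinf
  have hJfx : Tendsto (fun k => Jf (xhat k)) atTop (nhds (Jf xinf)) :=
    (hJfLip.continuous.tendsto xinf).comp hxh
  refine ⟨hJfx, ?_⟩
  set xb := Jf xinf with hxb
  set zinf := (2 : ℝ) • xb - xinf - lam • gradient w xb with hz
  -- z k → zinf
  have hzt : Tendsto
      (fun k => (2 : ℝ) • Jf (xhat k) - xhat k - lam • gradient w (Jf (xhat k)))
      atTop (nhds zinf) := by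
    exact ((hJfx.const_smul (2 : ℝ)).sub hxh).sub
      (((hwc.tendsto xb).comp hJfx).const_smul lam)
  -- Jg (z k) → Jg zinf
  have hJgz : Tendsto
      (fun k => Jg ((2 : ℝ) • Jf (xhat k) - xhat k - lam • gradient w (Jf (xhat k))))
      atTop (nhds (Jg zinf)) :=
    (hJgLip.continuous.tendsto zinf).comp hzt
  -- but also Jg (z k) = x (k+1) - xhat k + Jf (xhat k) → xb
  have hJgz' : Tendsto
      (fun k => Jg ((2 : ℝ) • Jf (xhat k) - xhat k - lam • gradient w (Jf (xhat k))))
      atTop (nhds xb) := by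
    have heq : ∀ k, Jg ((2 : ℝ) • Jf (xhat k) - xhat k - lam • gradient w (Jf (xhat k)))
        = x (k + 1) - xhat k + Jf (xhat k) := by
      intro k
      have := hrec k
      rw [this]
      abel
    simp only [heq]
    have := (hx1.sub hxh).add hJfx
    simpa using this
  have hfix : Jg zinf = xb := tendsto_nhds_unique hJgz hJgz'
  -- algebra
  have e1 : lam • gradient f xb = xinf - xb := by
    have h := hJf xinf
    rw [eq_sub_iff_add_eq, add_comm]
    exact h
  have e2 : lam • gradient g xb = xb - xinf - lam • gradient w xb := by
    have h := hJg zinf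
    rw [hfix, hz] at h
    have : lam • gradient g xb = ((2:ℝ) • xb - xinf - lam • gradient w xb) - xb := by
      rw [eq_sub_iff_add_eq, add_comm]; exact h
    rw [this]; module
  have hsum : lam • (gradient f xb + gradient g xb + gradient w xb) = 0 := by
    rw [smul_add, smul_add, e1, e2]
    module
  rcases smul_eq_zero.mp hsum with h | h
  · exact absurd h hlam.ne'
  · exact h
end

section
/- Let g : ℝⁿ → ℝ be convex and differentiable, let w : ℝⁿ → ℝ be differentiable with L-Lipschitz gradient, and let λ > 0 satisfy λL < 1. Let J_g : ℝⁿ → ℝⁿ satisfy J_g(u) + λ∇g(J_g(u)) = u for every u ∈ ℝⁿ. Let γ_k ∈ [0,1] for all k, and let sequences (x_k), (x̂_k) in ℝⁿ satisfy, for all k ≥ 0, x̂_{k+1} = x_{k+1} + γ_{k+1}(x_{k+1} − x_k) and the accelerated Tseng recursion: x_{k+1/2} = J_g( x̂_k − λ∇w(x̂_k) ) and x_{k+1} = x_{k+1/2} − λ( ∇w(x_{k+1/2}) − ∇w(x̂_k) ). If x_k → x_∞ for some x_∞ ∈ ℝⁿ, then ∇g(x_∞) + ∇w(x_∞) = 0,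 i.e. x_∞ is a minimizer of g + w. -/
open Filter Topology InnerProductSpace RealInnerProductSpace

/-- Subgradient inequality for a differentiable convex function. -/
lemma subgrad_ineq {E : Type*} [NormedAddCommGroup E] [InnerProductSpace ℝ E]
    [CompleteSpace E] (g : E → ℝ) (hg : ConvexOn ℝ Set.univ g)
    (hgd : Differentiable ℝ g) (y z : E) :
    g y + ⟪gradient g y, z - y⟫_ℝ ≤ g z := by
  have hline : HasDerivAt (fun t : ℝ => (AffineMap.lineMap y z) t) (z - y) 0 := by
    simp only [AffineMap.lineMap_apply_module']
    simpa using ((hasDerivAt_id (0 : ℝ)).smul_const (z - y)).add_const y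
  have hgrad : HasFDerivAt g (toDual ℝ E (gradient g y)) ((AffineMap.lineMap y z) (0 : ℝ)) := by
    rw [AffineMap.lineMap_apply_zero]
    exact ((hgd y).hasGradientAt).hasFDerivAt
  have hcomp : HasDerivAt (g ∘ (AffineMap.lineMap y z : ℝ →ᵃ[ℝ] E))
      (toDual ℝ E (gradient g y) (z - y)) 0 :=
    hgrad.comp_hasDerivAt 0 hline
  have hconv' : ConvexOn ℝ Set.univ (g ∘ (AffineMap.lineMap y z : ℝ →ᵃ[ℝ] E)) := by
    simpa using hg.comp_affineMap (AffineMap.lineMap y z : ℝ →ᵃ[ℝ] E)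
  have hslope := hconv'.le_slope_of_hasDerivAt (Set.mem_univ (0 : ℝ))
    (Set.mem_univ (1 : ℝ)) zero_lt_one hcomp
  rw [toDual_apply_apply] at hslope
  simp only [slope_def_field, Function.comp_apply, AffineMap.lineMap_apply_zero,
    AffineMap.lineMap_apply_one, sub_zero, div_one] at hslope
  linarith [hslope]

/-- If the iterates of the accelerated Tseng (forward-backward-forward)
method converge to `x_∞`, then `x_∞` is a zero of `∇g + ∇w`. -/
theorem stmt_4 {n : ℕ} (g w : EuclideanSpace ℝ (Fin n) → ℝ)
    (hg : ConvexOn ℝ Set.univ g)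
    (hgd : Differentiable ℝ g) (hwd : Differentiable ℝ w)
    (L : ℝ)
    (hLip : ∀ u v : EuclideanSpace ℝ (Fin n),
      ‖gradient w u - gradient w v‖ ≤ L * ‖u - v‖)
    (lam : ℝ) (hlam : 0 < lam) (hlamL : lam * L < 1)
    (Jg : EuclideanSpace ℝ (Fin n) → EuclideanSpace ℝ (Fin n))
    (hJg : ∀ u, Jg u + lam • gradient g (Jg u) = u)
    (γ : ℕ → ℝ) (hγ : ∀ k, γ k ∈ Set.Icc (0 : ℝ) 1)
    (x xhat : ℕ → EuclideanSpace ℝ (Fin n))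
    (hxhat : ∀ k, xhat (k + 1) = x (k + 1) + γ (k + 1) • (x (k + 1) - x k))
    (hrec : ∀ k, x (k + 1) =
      Jg (xhat k - lam • gradient w (xhat k))
        - lam • (gradient w (Jg (xhat k - lam • gradient w (xhat k)))
          - gradient w (xhat k)))
    (xinf : EuclideanSpace ℝ (Fin n))
    (hconv : Filter.Tendsto x Filter.atTop (nhds xinf)) :
    gradient g xinf + gradient w xinf = 0 := by
  classical
  rcases subsingleton_or_nontrivial (EuclideanSpace ℝ (Fin n)) with hsub | hnt
  · exact Subsingleton.elim _ _
  -- L is nonnegative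
  obtain ⟨e, he⟩ := exists_ne (0 : EuclideanSpace ℝ (Fin n))
  have hL0 : 0 ≤ L := by
    have h1 := hLip e 0
    have h2 : (0 : ℝ) < ‖e - 0‖ := by simpa [norm_pos_iff, sub_zero] using he
    nlinarith [norm_nonneg (gradient w e - gradient w 0)]
  -- gradient of w is continuous
  have hwc : Continuous (gradient w) := by
    have : LipschitzWith (Real.toNNReal L) (gradient w) := by
      apply LipschitzWith.of_dist_le_mul
      intro a b
      rw [dist_eq_norm, dist_eq_norm]
      simpa [Real.coe_toNNReal L hL0] using hLip a b
    exact this.continuous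
  -- convergence of shifted sequences
  have hx1 : Tendsto (fun k => x (k + 1)) atTop (𝓝 xinf) :=
    hconv.comp (tendsto_add_atTop_nat 1)
  have hd0 : Tendsto (fun k => x (k + 1) - x k) atTop (𝓝 0) := by
    simpa using hx1.sub hconv
  have hxhat1 : Tendsto (fun k => xhat (k + 1)) atTop (𝓝 xinf) := by
    have hsmul : Tendsto (fun k => γ (k + 1) • (x (k + 1) - x k)) atTop (𝓝 0) := by
      apply squeeze_zero_norm (a := fun k => ‖x (k + 1) - x k‖)
      · intro k
        rw [norm_smul]
        have hγk := hγ (k + 1)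
        have : |γ (k + 1)| ≤ 1 := abs_le.2 ⟨by linarith [hγk.1], hγk.2⟩
        calc ‖γ (k+1)‖ * ‖x (k+1) - x k‖ ≤ 1 * ‖x (k+1) - x k‖ := by
              apply mul_le_mul_of_nonneg_right _ (norm_nonneg _)
              simpa [Real.norm_eq_abs] using this
          _ = ‖x (k+1) - x k‖ := one_mul _
      · simpa using hd0.norm
    have := hx1.add hsmul
    simp only [add_zero] at this
    refine this.congr ?_
    intro k
    rw [hxhat k]
  have hxhatc : Tendsto xhat atTop (𝓝 xinf) := (tendsto_add_atTop_iff_nat 1).mp hxhat1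
  -- the intermediate iterate
  set y : ℕ → EuclideanSpace ℝ (Fin n) :=
    fun k => Jg (xhat k - lam • gradient w (xhat k)) with hy_def
  -- bound on ‖y k - x (k+1)‖
  have hb : Tendsto (fun k => ‖x (k + 1) - xhat k‖) atTop (𝓝 0) := by
    have := (hx1.sub hxhatc).norm
    simpa using this
  have hkey : ∀ k, ‖y k - x (k + 1)‖ ≤ (lam * L / (1 - lam * L)) * ‖x (k + 1) - xhat k‖ := by
    intro k
    have hxk : x (k + 1) = y k - lam • (gradient w (y k) - gradient w (xhat k)) := hrec k
    have h1 : ‖y k - x (k + 1)‖ = lam * ‖gradient w (y k) - gradient w (xhat k)‖ := by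
      rw [hxk]
      simp only [sub_sub_cancel, norm_smul, Real.norm_eq_abs, abs_of_pos hlam]
    have h2 : ‖gradient w (y k) - gradient w (xhat k)‖ ≤ L * ‖y k - xhat k‖ := hLip _ _
    have h3 : ‖y k - xhat k‖ ≤ ‖y k - x (k + 1)‖ + ‖x (k + 1) - xhat k‖ :=
      norm_sub_le_norm_sub_add_norm_sub _ _ _
    have h4 : ‖y k - x (k + 1)‖ ≤ lam * L * (‖y k - x (k + 1)‖ + ‖x (k + 1) - xhat k‖) := by
      rw [h1]
      calc lam * ‖gradient w (y k) - gradient w (xhat k)‖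
          ≤ lam * (L * ‖y k - xhat k‖) := by
            exact mul_le_mul_of_nonneg_left h2 hlam.le
        _ ≤ lam * (L * (‖y k - x (k + 1)‖ + ‖x (k + 1) - xhat k‖)) := by
            have := mul_le_mul_of_nonneg_left h3 hL0
            rw [h1] at this ⊢
            nlinarith
        _ = lam * L * (lam * ‖gradient w (y k) - gradient w (xhat k)‖
              + ‖x (k + 1) - xhat k‖) := by rw [h1]; ring
    have hpos : 0 < 1 - lam * L := by linarith
    rw [div_mul_eq_mul_div, le_div_iff₀ hpos]
    nlinarith [h4]
  have hyx : Tendsto (fun k => y k - x (k + 1)) atTop (𝓝 0) := by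
    apply squeeze_zero_norm hkey
    have := hb.const_mul (lam * L / (1 - lam * L))
    simpa using this
  have hyc : Tendsto y atTop (𝓝 xinf) := by
    have := hyx.add hx1
    simpa using this
  -- gradient g (y k) converges to -(gradient w xinf)
  have hJy : ∀ k, gradient g (y k) =
      lam⁻¹ • (xhat k - lam • gradient w (xhat k) - y k) := by
    intro k
    have h := hJg (xhat k - lam • gradient w (xhat k))
    have : lam • gradient g (y k) = xhat k - lam • gradient w (xhat k) - y k := by
      rw [← h]; abel
    rw [← this, smul_smul, inv_mul_cancel₀ (ne_of_gt hlam), one_smul]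
  have hwgx : Tendsto (fun k => gradient w (xhat k)) atTop (𝓝 (gradient w xinf)) :=
    (hwc.tendsto xinf).comp hxhatc
  have hgy : Tendsto (fun k => gradient g (y k)) atTop (𝓝 (-(gradient w xinf))) := by
    have h1 : Tendsto (fun k => xhat k - lam • gradient w (xhat k) - y k) atTop
        (𝓝 (xinf - lam • gradient w xinf - xinf)) :=
      (hxhatc.sub (hwgx.const_smul lam)).sub hyc
    have h2 := h1.const_smul (lam⁻¹)
    have heq : lam⁻¹ • (xinf - lam • gradient w xinf - xinf) = -(gradient w xinf) := by
      rw [sub_sub_cancel_left, smul_neg, smul_smul, inv_mul_cancel₀ (ne_of_gt hlam), one_smul]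
    rw [heq] at h2
    exact h2.congr fun k => (hJy k).symm
  -- limiting subgradient inequality
  have hsub : ∀ z, g xinf + ⟪-(gradient w xinf), z - xinf⟫_ℝ ≤ g z := by
    intro z
    have hineq : ∀ k, g (y k) + ⟪gradient g (y k), z - y k⟫_ℝ ≤ g z :=
      fun k => subgrad_ineq g hg hgd (y k) z
    have hlim : Tendsto (fun k => g (y k) + ⟪gradient g (y k), z - y k⟫_ℝ) atTop
        (𝓝 (g xinf + ⟪-(gradient w xinf), z - xinf⟫_ℝ)) := by
      exact ((hgd.continuous.tendsto xinf).comp hyc).add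
        (hgy.inner (tendsto_const_nhds.sub hyc))
    exact le_of_tendsto' hlim hineq
  -- xinf is a global (hence local) min of h z = g z + ⟪∇w xinf, z⟫
  set c := gradient w xinf with hc
  have hmin : ∀ z, g xinf + ⟪c, xinf⟫_ℝ ≤ g z + ⟪c, z⟫_ℝ := by
    intro z
    have := hsub z
    rw [inner_neg_left, inner_sub_right] at this
    linarith
  have hlocmin : IsLocalMin (fun z => g z + ⟪c, z⟫_ℝ) xinf :=
    Filter.Eventually.of_forall hmin
  have hfd : HasFDerivAt (fun z => g z + ⟪c, z⟫_ℝ)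
      (toDual ℝ (EuclideanSpace ℝ (Fin n)) (gradient g xinf) + innerSL ℝ c) xinf := by
    exact ((hgd xinf).hasGradientAt).hasFDerivAt.add ((innerSL ℝ c).hasFDerivAt)
  have hzero := hlocmin.hasFDerivAt_eq_zero hfd
  have hv : ∀ v, ⟪gradient g xinf + c, v⟫_ℝ = 0 := by
    intro v
    have := congrArg (fun f => f v) hzero
    simp only [ContinuousLinearMap.add_apply, ContinuousLinearMap.zero_apply,
      toDual_apply_apply, innerSL_apply_apply] at this
    rw [inner_add_left]
    exact this
  have := hv (gradient g xinf + c)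
  rwa [inner_self_eq_zero] at this
end

section
/- Let f, g : ℝⁿ → ℝ be convex and differentiable with continuous gradients, and let w : ℝⁿ → ℝ be differentiable with continuous gradient. Let λ > 0 and let J_f, J_g : ℝⁿ → ℝⁿ satisfy J_f(u) + λ∇f(J_f(u)) = u and J_g(u) + λ∇g(J_g(u)) = u for every u ∈ ℝⁿ. Let γ_k ∈ [0,1] for all k, and let sequences (x_k), (x̂_k), (c_k) in ℝⁿ satisfy, for all k ≥ 0, x̂_{k+1} = x_{k+1} + γ_{k+1}(x_{k+1} − x_k) and the accelerated ADMM recursion: x_{k+1/2} = J_f( x̂_k − λ∇w(x̂_k) + λc_k ), x_{k+1} = J_g( x_{k+1/2} − λc_k ), and c_{k+1} = c_k + (x_{k+1} − x_{k+1/2})/λ. If x_k → x_∞ and c_k → c_∞ for some x_∞, c_∞ ∈ ℝⁿ, then ∇g(x_∞) = −c_∞, ∇f(x_∞) + ∇w(x_∞) = c_∞, and hence ∇f(x_∞) + ∇g(x_∞) + ∇w(x_∞) = 0, i.e. the limit x_∞ is a minimizer of f + g + w and the discretization preserves steady states of the underlying ODE. -/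
/-- If the iterates and balance coefficients of the accelerated ADMM
extension converge, then the limit is a zero of `∇f + ∇g + ∇w` with
`∇g(x_∞) = -c_∞` and `∇f(x_∞) + ∇w(x_∞) = c_∞`. -/
theorem stmt_5 {n : ℕ} (f g w : EuclideanSpace ℝ (Fin n) → ℝ)
    (hf : ConvexOn ℝ Set.univ f) (hg : ConvexOn ℝ Set.univ g)
    (hfd : Differentiable ℝ f) (hgd : Differentiable ℝ g) (hwd : Differentiable ℝ w)
    (hfc : Continuous (gradient f)) (hgc : Continuous (gradient g))
    (hwc : Continuous (gradient w))
    (lam : ℝ) (hlam : 0 < lam)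
    (Jf Jg : EuclideanSpace ℝ (Fin n) → EuclideanSpace ℝ (Fin n))
    (hJf : ∀ u, Jf u + lam • gradient f (Jf u) = u)
    (hJg : ∀ u, Jg u + lam • gradient g (Jg u) = u)
    (γ : ℕ → ℝ) (hγ : ∀ k, γ k ∈ Set.Icc (0 : ℝ) 1)
    (x xhalf xhat c : ℕ → EuclideanSpace ℝ (Fin n))
    (hxhat : ∀ k, xhat (k + 1) = x (k + 1) + γ (k + 1) • (x (k + 1) - x k))
    (h1 : ∀ k, xhalf k = Jf (xhat k - lam • gradient w (xhat k) + lam • c k))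
    (h2 : ∀ k, x (k + 1) = Jg (xhalf k - lam • c k))
    (h3 : ∀ k, c (k + 1) = c k + (1 / lam) • (x (k + 1) - xhalf k))
    (xinf cinf : EuclideanSpace ℝ (Fin n))
    (hxconv : Filter.Tendsto x Filter.atTop (nhds xinf))
    (hcconv : Filter.Tendsto c Filter.atTop (nhds cinf)) :
    gradient g xinf = -cinf ∧
    gradient f xinf + gradient w xinf = cinf ∧
    gradient f xinf + gradient g xinf + gradient w xinf = 0 := by
  have hlam' : lam ≠ 0 := ne_of_gt hlam
  have hx1 : Filter.Tendsto (fun k => x (k + 1)) Filter.atTop (nhds xinf) :=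
    hxconv.comp (Filter.tendsto_add_atTop_nat 1)
  have hc1 : Filter.Tendsto (fun k => c (k + 1)) Filter.atTop (nhds cinf) :=
    hcconv.comp (Filter.tendsto_add_atTop_nat 1)
  -- x(k+1) - xhalf k = lam • (c(k+1) - c k)
  have hdiffeq : ∀ k, x (k + 1) - xhalf k = lam • (c (k + 1) - c k) := by
    intro k
    rw [h3 k]
    rw [add_sub_cancel_left, smul_smul]
    field_simp
    rw [one_smul]
  have hdiff0 : Filter.Tendsto (fun k => x (k + 1) - xhalf k) Filter.atTop (nhds 0) := by
    have : Filter.Tendsto (fun k => lam • (c (k + 1) - c k)) Filter.atTop (nhds (lam • (cinf - cinf))) :=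
      Filter.Tendsto.const_smul (hc1.sub hcconv) lam
    simp only [sub_self, smul_zero] at this
    simpa only [hdiffeq] using this
  have hhalf : Filter.Tendsto xhalf Filter.atTop (nhds xinf) := by
    have : Filter.Tendsto (fun k => x (k + 1) - (x (k + 1) - xhalf k)) Filter.atTop
        (nhds (xinf - 0)) := hx1.sub hdiff0
    simpa using this
  have hxd0 : Filter.Tendsto (fun k => x (k + 1) - x k) Filter.atTop (nhds 0) := by
    have := hx1.sub hxconv
    simpa using this
  have hsmul0 : Filter.Tendsto (fun k => γ (k + 1) • (x (k + 1) - x k)) Filter.atTop (nhds 0) := by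
    refine squeeze_zero_norm (fun k => ?_) (by simpa using hxd0.norm)
    · rw [norm_smul]
      have h0 := (hγ (k + 1)).1
      have h1' := (hγ (k + 1)).2
      calc |γ (k + 1)| * ‖x (k + 1) - x k‖ ≤ 1 * ‖x (k + 1) - x k‖ := by
            apply mul_le_mul_of_nonneg_right _ (norm_nonneg _)
            rw [abs_of_nonneg h0]; exact h1'
        _ = ‖x (k + 1) - x k‖ := one_mul _
  have hhat : Filter.Tendsto (fun k => xhat (k + 1)) Filter.atTop (nhds xinf) := by
    have : Filter.Tendsto (fun k => x (k + 1) + γ (k + 1) • (x (k + 1) - x k)) Filter.atTop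
        (nhds (xinf + 0)) := hx1.add hsmul0
    simp only [add_zero] at this
    simpa only [hxhat] using this
  -- g equation
  have hgeq : ∀ k, x (k + 1) + lam • gradient g (x (k + 1)) = xhalf k - lam • c k := by
    intro k
    rw [h2 k]
    exact hJg _
  have hglim : Filter.Tendsto (fun k => x (k + 1) + lam • gradient g (x (k + 1)))
      Filter.atTop (nhds (xinf + lam • gradient g xinf)) :=
    hx1.add (((hgc.tendsto xinf).comp hx1).const_smul lam)
  have hglim2 : Filter.Tendsto (fun k => xhalf k - lam • c k) Filter.atTop
      (nhds (xinf - lam • cinf)) :=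
    hhalf.sub (hcconv.const_smul lam)
  have hgkey : xinf + lam • gradient g xinf = xinf - lam • cinf :=
    tendsto_nhds_unique (by simpa only [hgeq] using hglim) hglim2
  have hG : gradient g xinf = -cinf := by
    have : lam • gradient g xinf = lam • (-cinf) := by
      have := hgkey
      rw [sub_eq_add_neg, ← smul_neg] at this
      exact add_left_cancel this
    exact smul_right_injective _ hlam' this
  -- f equation, shifted by one
  have hfeq : ∀ k, xhalf (k + 1) + lam • gradient f (xhalf (k + 1)) =
      xhat (k + 1) - lam • gradient w (xhat (k + 1)) + lam • c (k + 1) := by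
    intro k
    rw [h1 (k + 1)]
    exact hJf _
  have hhalf1 : Filter.Tendsto (fun k => xhalf (k + 1)) Filter.atTop (nhds xinf) :=
    hhalf.comp (Filter.tendsto_add_atTop_nat 1)
  have hflim : Filter.Tendsto (fun k => xhalf (k + 1) + lam • gradient f (xhalf (k + 1)))
      Filter.atTop (nhds (xinf + lam • gradient f xinf)) :=
    hhalf1.add (((hfc.tendsto xinf).comp hhalf1).const_smul lam)
  have hflim2 : Filter.Tendsto
      (fun k => xhat (k + 1) - lam • gradient w (xhat (k + 1)) + lam • c (k + 1))
      Filter.atTop (nhds (xinf - lam • gradient w xinf + lam • cinf)) :=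
    (hhat.sub (((hwc.tendsto xinf).comp hhat).const_smul lam)).add (hc1.const_smul lam)
  have hfkey : xinf + lam • gradient f xinf = xinf - lam • gradient w xinf + lam • cinf :=
    tendsto_nhds_unique (by simpa only [hfeq] using hflim) hflim2
  have hF : gradient f xinf + gradient w xinf = cinf := by
    have : lam • (gradient f xinf + gradient w xinf) = lam • cinf := by
      rw [smul_add]
      have := hfkey
      rw [sub_eq_add_neg, add_assoc] at this
      have h' := add_left_cancel this
      rw [h']
      abel
    exact smul_right_injective _ hlam' this
  refine ⟨hG, hF, ?_⟩
  rw [hG]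
  rw [show gradient f xinf + -cinf + gradient w xinf
      = gradient f xinf + gradient w xinf + -cinf by abel, hF]
  simp
end

section
/- Let r > 0 and let f, g, w : ℝⁿ → ℝ be differentiable, with each of ∇f, ∇g, ∇w L-Lipschitz and bounded in norm by G. Let t ∈ ℝ, h₀ ∈ (0,1], V ≥ 0, and let x, v : ℝ → ℝⁿ be differentiable on [t, t+h₀] with x′(s) = v(s), v′(s) = −r v(s) − (∇f + ∇g + ∇w)(x(s)), and ‖v(s)‖ ≤ V for all s ∈ [t, t+h₀] (a solution of the accelerated gradient flow with constant damping). Then there exists a constant C > 0 such that for every h ∈ (0, h₀] the following holds: with λ := h², x̂ := x(t) + h(1 − rh)v(t), and the Davis–Yin step from x̂, namely x¼ with x¼ + λ∇f(x¼) = x̂, x½ := 2x¼ − x̂, x¾ with x¾ + λ∇g(x¾) = x½ − λ∇w(x¼), x⁺ := x̂ + x¾ − x¼, and v⁺ := (x⁺ − x(t))/h, one has ‖x(t+h) − x⁺‖ ≤ C h² and ‖v(t+h) − v⁺‖ ≤ C h². (Hence the accelerated Davis–Yin method with constant damping is a first-order integrator of the accelerated gradient flow ẍ + rẋ = −∇(f+g+w)(x).)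 -/
set_option maxHeartbeats 2000000

/-- The accelerated Davis-Yin method with constant damping `r` is a
first-order integrator of the accelerated gradient flow `ẍ + rẋ = -∇(f+g+w)(x)`. -/
theorem stmt_12 {n : ℕ} (r : ℝ) (hr : 0 < r)
    (f g w : EuclideanSpace ℝ (Fin n) → ℝ)
    (hfd : Differentiable ℝ f) (hgd : Differentiable ℝ g) (hwd : Differentiable ℝ w)
    (L G : ℝ)
    (hfL : ∀ u v : EuclideanSpace ℝ (Fin n), ‖gradient f u - gradient f v‖ ≤ L * ‖u - v‖)
    (hgL : ∀ u v : EuclideanSpace ℝ (Fin n), ‖gradient g u - gradient g v‖ ≤ L * ‖u - v‖)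
    (hwL : ∀ u v : EuclideanSpace ℝ (Fin n), ‖gradient w u - gradient w v‖ ≤ L * ‖u - v‖)
    (hfG : ∀ u, ‖gradient f u‖ ≤ G)
    (hgG : ∀ u, ‖gradient g u‖ ≤ G)
    (hwG : ∀ u, ‖gradient w u‖ ≤ G)
    (t : ℝ) (h₀ : ℝ) (hh₀ : h₀ ∈ Set.Ioc (0 : ℝ) 1) (V : ℝ) (hV : 0 ≤ V)
    (x v : ℝ → EuclideanSpace ℝ (Fin n))
    (hx : ∀ s ∈ Set.Icc t (t + h₀),
      HasDerivWithinAt x (v s) (Set.Icc t (t + h₀)) s)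
    (hv : ∀ s ∈ Set.Icc t (t + h₀), HasDerivWithinAt v
      (-(r • v s) - (gradient f (x s) + gradient g (x s) + gradient w (x s)))
      (Set.Icc t (t + h₀)) s)
    (hVb : ∀ s ∈ Set.Icc t (t + h₀), ‖v s‖ ≤ V) :
    ∃ C > 0, ∀ h : ℝ, 0 < h → h ≤ h₀ →
      ∀ xq xt : EuclideanSpace ℝ (Fin n),
        xq + (h ^ 2) • gradient f xq = x t + (h * (1 - r * h)) • v t →
        xt + (h ^ 2) • gradient g xt =
          (((2 : ℝ) • xq - (x t + (h * (1 - r * h)) • v t)) - (h ^ 2) • gradient w xq) →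
        ‖x (t + h) - ((x t + (h * (1 - r * h)) • v t) + xt - xq)‖ ≤ C * h ^ 2 ∧
        ‖v (t + h) - (1 / h) • ((((x t + (h * (1 - r * h)) • v t) + xt - xq)) - x t)‖
          ≤ C * h ^ 2 := by
  obtain ⟨hh0pos, hh0le1⟩ := hh₀
  have _E : True := trivial
  set L' := max L 0 with hL'def
  set G' := max G 0 with hG'def
  have hL'0 : (0:ℝ) ≤ L' := le_max_right _ _
  have hG'0 : (0:ℝ) ≤ G' := le_max_right _ _
  have hfG' : ∀ u, ‖gradient f u‖ ≤ G' := fun u => (hfG u).trans (le_max_left _ _)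
  have hgG' : ∀ u, ‖gradient g u‖ ≤ G' := fun u => (hgG u).trans (le_max_left _ _)
  have hwG' : ∀ u, ‖gradient w u‖ ≤ G' := fun u => (hwG u).trans (le_max_left _ _)
  have hfL' : ∀ u v : EuclideanSpace ℝ (Fin n), ‖gradient f u - gradient f v‖ ≤ L' * ‖u - v‖ := fun u v =>
    (hfL u v).trans (mul_le_mul_of_nonneg_right (le_max_left _ _) (norm_nonneg _))
  have hgL' : ∀ u v : EuclideanSpace ℝ (Fin n), ‖gradient g u - gradient g v‖ ≤ L' * ‖u - v‖ := fun u v =>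
    (hgL u v).trans (mul_le_mul_of_nonneg_right (le_max_left _ _) (norm_nonneg _))
  have hwL' : ∀ u v : EuclideanSpace ℝ (Fin n), ‖gradient w u - gradient w v‖ ≤ L' * ‖u - v‖ := fun u v =>
    (hwL u v).trans (mul_le_mul_of_nonneg_right (le_max_left _ _) (norm_nonneg _))
  set M : ℝ := r * V + 3 * G' with hMdef
  have hM0 : 0 ≤ M := by positivity
  set I := Set.Icc t (t + h₀) with hIdef
  have hIconv : Convex ℝ I := convex_Icc _ _
  have htI : t ∈ I := ⟨le_refl _, by linarith⟩
  set F' : ℝ → EuclideanSpace ℝ (Fin n) := fun s =>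
    -(r • v s) - (gradient f (x s) + gradient g (x s) + gradient w (x s)) with hF'def
  have hv' : ∀ s ∈ I, HasDerivWithinAt v (F' s) I s := hv
  have hF'bd : ∀ s ∈ I, ‖F' s‖ ≤ M := by
    intro s hs
    have h1 : ‖F' s‖ ≤ ‖-(r • v s)‖ +
        ‖gradient f (x s) + gradient g (x s) + gradient w (x s)‖ := norm_sub_le _ _
    have h2 : ‖gradient f (x s) + gradient g (x s) + gradient w (x s)‖ ≤
        ‖gradient f (x s)‖ + ‖gradient g (x s)‖ + ‖gradient w (x s)‖ := norm_add₃_le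
    have h3 : ‖-(r • v s)‖ = r * ‖v s‖ := by
      rw [norm_neg, norm_smul, Real.norm_eq_abs, abs_of_pos hr]
    have h4 := hVb s hs
    have h5 := hfG' (x s); have h6 := hgG' (x s); have h7 := hwG' (x s)
    have h8 : r * ‖v s‖ ≤ r * V := mul_le_mul_of_nonneg_left h4 hr.le
    rw [h3] at h1
    simp only [hMdef]
    linarith
  have hvlip : ∀ s ∈ I, ‖v s - v t‖ ≤ M * ‖s - t‖ := fun s hs =>
    hIconv.norm_image_sub_le_of_norm_hasDerivWithin_le hv' hF'bd htI hs
  have hxlip : ∀ s ∈ I, ‖x s - x t‖ ≤ V * ‖s - t‖ := fun s hs =>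
    hIconv.norm_image_sub_le_of_norm_hasDerivWithin_le hx hVb htI hs
  refine ⟨2 * M + (r * M + 3 * L' * V) + L' * (6 * G' + 3 * (1 + r) * V) + 1, by positivity,
    ?_⟩
  intro h hh hhle xq xt e1 e2
  have hh2 : h ^ 2 ≤ h := by nlinarith
  have hthI : t + h ∈ I := ⟨by linarith, by linarith⟩
  set J := Set.Icc t (t + h) with hJdef
  have hJI : J ⊆ I := Set.Icc_subset_Icc_right (by linarith)
  have hJconv : Convex ℝ J := convex_Icc _ _
  have htJ : t ∈ J := ⟨le_refl _, by linarith⟩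
  have hthJ : t + h ∈ J := ⟨by linarith, le_refl _⟩
  have hnorm_th : ‖(t + h) - t‖ = h := by
    rw [add_sub_cancel_left, Real.norm_of_nonneg hh.le]
  -- Lipschitz bounds on J
  have hvJ : ∀ s ∈ J, ‖v s - v t‖ ≤ M * h := by
    intro s hs
    refine (hvlip s (hJI hs)).trans ?_
    have : ‖s - t‖ ≤ h := by
      rw [Real.norm_of_nonneg (by linarith [hs.1])]
      linarith [hs.2]
    exact mul_le_mul_of_nonneg_left this hM0
  have hxJ : ∀ s ∈ J, ‖x s - x t‖ ≤ V * h := by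
    intro s hs
    refine (hxlip s (hJI hs)).trans ?_
    have : ‖s - t‖ ≤ h := by
      rw [Real.norm_of_nonneg (by linarith [hs.1])]
      linarith [hs.2]
    exact mul_le_mul_of_nonneg_left this hV
  -- key estimate 1 : x(t+h) close to x t + h v t
  have key1 : ‖x (t + h) - x t - h • v t‖ ≤ M * h * h := by
    have hder : ∀ s ∈ J, HasDerivWithinAt (fun s => x s - s • v t) (v s - v t) J s := by
      intro s hs
      have h1 := (hx s (hJI hs)).mono hJI
      have h2 : HasDerivWithinAt (fun s : ℝ => s • v t) ((1:ℝ) • v t) J s :=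
        (hasDerivWithinAt_id s J).smul_const (v t)
      have h3 := h1.sub h2; rw [one_smul] at h3; exact h3
    have := hJconv.norm_image_sub_le_of_norm_hasDerivWithin_le hder hvJ htJ hthJ
    rw [hnorm_th] at this
    calc ‖x (t + h) - x t - h • v t‖
        = ‖(x (t + h) - (t + h) • v t) - (x t - t • v t)‖ := by
          congr 1; rw [add_smul]; abel
      _ ≤ M * h * h := this
  -- key estimate 2 : v(t+h) close to v t + h v'(t)
  set a : EuclideanSpace ℝ (Fin n) := F' t with hadef
  have hF'J : ∀ s ∈ J, ‖F' s - a‖ ≤ (r * M + 3 * L' * V) * h := by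
    intro s hs
    have hsp : F' s - a = -(r • (v s - v t)) -
        ((gradient f (x s) - gradient f (x t)) + (gradient g (x s) - gradient g (x t))
          + (gradient w (x s) - gradient w (x t))) := by
      simp only [hadef, hF'def, smul_sub]; abel
    rw [hsp]
    have h1 : ‖-(r • (v s - v t)) -
        ((gradient f (x s) - gradient f (x t)) + (gradient g (x s) - gradient g (x t))
          + (gradient w (x s) - gradient w (x t)))‖
        ≤ ‖-(r • (v s - v t))‖ + (‖gradient f (x s) - gradient f (x t)‖ +
          ‖gradient g (x s) - gradient g (x t)‖ + ‖gradient w (x s) - gradient w (x t)‖) :=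
      (norm_sub_le _ _).trans (by gcongr; exact norm_add₃_le)
    have h2 : ‖-(r • (v s - v t))‖ = r * ‖v s - v t‖ := by
      rw [norm_neg, norm_smul, Real.norm_eq_abs, abs_of_pos hr]
    have h3 := hvJ s hs
    have hx3 := hxJ s hs
    have h4 : ‖gradient f (x s) - gradient f (x t)‖ ≤ L' * (V * h) :=
      (hfL' _ _).trans (mul_le_mul_of_nonneg_left hx3 hL'0)
    have h5 : ‖gradient g (x s) - gradient g (x t)‖ ≤ L' * (V * h) :=
      (hgL' _ _).trans (mul_le_mul_of_nonneg_left hx3 hL'0)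
    have h6 : ‖gradient w (x s) - gradient w (x t)‖ ≤ L' * (V * h) :=
      (hwL' _ _).trans (mul_le_mul_of_nonneg_left hx3 hL'0)
    have h7 : r * ‖v s - v t‖ ≤ r * (M * h) := mul_le_mul_of_nonneg_left h3 hr.le
    rw [h2] at h1
    nlinarith
  have key2 : ‖v (t + h) - v t - h • a‖ ≤ (r * M + 3 * L' * V) * h * h := by
    have hder : ∀ s ∈ J, HasDerivWithinAt (fun s => v s - s • a) (F' s - a) J s := by
      intro s hs
      have h1 := (hv' s (hJI hs)).mono hJI
      have h2 : HasDerivWithinAt (fun s : ℝ => s • a) ((1:ℝ) • a) J s :=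
        (hasDerivWithinAt_id s J).smul_const a
      have h3 := h1.sub h2; rw [one_smul] at h3; exact h3
    have := hJconv.norm_image_sub_le_of_norm_hasDerivWithin_le hder hF'J htJ hthJ
    rw [hnorm_th] at this
    calc ‖v (t + h) - v t - h • a‖
        = ‖(v (t + h) - (t + h) • a) - (v t - t • a)‖ := by
          congr 1; rw [add_smul]; abel
      _ ≤ (r * M + 3 * L' * V) * h * h := this
  -- algebraic identities from the implicit equations
  have hq' : xq - (x t + (h * (1 - r * h)) • v t) = -((h ^ 2) • gradient f xq) := by
    rw [← e1]; abel
  have hd : xt - xq = -((h ^ 2) • gradient f xq) - (h ^ 2) • gradient w xq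
      - (h ^ 2) • gradient g xt := by
    rw [← e1, two_smul] at e2
    have h2 := eq_sub_of_add_eq e2
    conv_lhs => rw [h2]
    abel
  have hbz : ∀ z : EuclideanSpace ℝ (Fin n), ‖z‖ ≤ G' → ‖(h ^ 2) • z‖ ≤ G' * h ^ 2 := by
    intro z hz
    rw [norm_smul, Real.norm_of_nonneg (by positivity : (0:ℝ) ≤ h ^ 2)]
    nlinarith [norm_nonneg z]
  have hnd : ‖xt - xq‖ ≤ 3 * G' * h ^ 2 := by
    rw [hd]
    have b1 := hbz _ (hfG' xq); have b2 := hbz _ (hwG' xq); have b3 := hbz _ (hgG' xt)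
    calc ‖-((h ^ 2) • gradient f xq) - (h ^ 2) • gradient w xq - (h ^ 2) • gradient g xt‖
        ≤ ‖-((h ^ 2) • gradient f xq) - (h ^ 2) • gradient w xq‖ +
          ‖(h ^ 2) • gradient g xt‖ := norm_sub_le _ _
      _ ≤ (‖-((h ^ 2) • gradient f xq)‖ + ‖(h ^ 2) • gradient w xq‖) +
          ‖(h ^ 2) • gradient g xt‖ := add_le_add (norm_sub_le _ _) le_rfl
      _ ≤ 3 * G' * h ^ 2 := by rw [norm_neg]; linarith
  have hnq : ‖xq - (x t + (h * (1 - r * h)) • v t)‖ ≤ G' * h ^ 2 := by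
    rw [hq', norm_neg]
    exact hbz _ (hfG' xq)
  have hVt := hVb t htI
  have hmom : ‖(h * (1 - r * h)) • v t‖ ≤ (1 + r) * V * h := by
    rw [norm_smul, Real.norm_eq_abs, abs_mul, abs_of_pos hh]
    have h1 : |1 - r * h| ≤ 1 + r := by
      have h2 : 0 ≤ r * h := mul_nonneg hr.le hh.le
      have h3 : r * h ≤ r := by nlinarith
      exact abs_le.mpr ⟨by linarith, by linarith⟩
    calc h * |1 - r * h| * ‖v t‖ ≤ h * (1 + r) * V := by
          have h0 : (0:ℝ) ≤ 1 + r := by linarith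
          have := mul_le_mul (mul_le_mul_of_nonneg_left h1 hh.le) hVt
            (norm_nonneg _) (by positivity)
          linarith
      _ = (1 + r) * V * h := by ring
  have hqxt : ‖xq - x t‖ ≤ (G' + (1 + r) * V) * h := by
    have hsp : xq - x t = (xq - (x t + (h * (1 - r * h)) • v t)) +
        (h * (1 - r * h)) • v t := by abel
    rw [hsp]
    refine (norm_add_le _ _).trans ?_
    nlinarith [hnq, hmom]
  have htxt : ‖xt - x t‖ ≤ (4 * G' + (1 + r) * V) * h := by
    have hsp : xt - x t = (xt - xq) + (xq - x t) := by abel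
    rw [hsp]
    refine (norm_add_le _ _).trans ?_
    nlinarith [hnd, hqxt]
  have hh2' : (0:ℝ) ≤ h ^ 2 := sq_nonneg h
  have c1 : (0:ℝ) ≤ r * M := mul_nonneg hr.le hM0
  have c2 : (0:ℝ) ≤ L' * V := mul_nonneg hL'0 hV
  have c3 : (0:ℝ) ≤ L' * (6 * G' + 3 * (1 + r) * V) := by
    have : (0:ℝ) ≤ 6 * G' + 3 * (1 + r) * V := by nlinarith [mul_nonneg hr.le hV]
    exact mul_nonneg hL'0 this
  constructor
  · -- position estimate
    have split1 : x (t + h) - ((x t + (h * (1 - r * h)) • v t) + xt - xq)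
        = (x (t + h) - x t - h • v t) + (r * h ^ 2) • v t - (xt - xq) := by
      have hs : (h * (1 - r * h)) • v t = h • v t - (r * h ^ 2) • v t := by
        rw [← sub_smul]; congr 1; ring
      rw [hs]; abel
    rw [split1]
    have n1 : ‖(r * h ^ 2) • v t‖ ≤ r * V * h ^ 2 := by
      rw [norm_smul, Real.norm_of_nonneg (mul_nonneg hr.le hh2')]
      nlinarith [mul_le_mul_of_nonneg_left hVt (mul_nonneg hr.le hh2')]
    calc ‖(x (t + h) - x t - h • v t) + (r * h ^ 2) • v t - (xt - xq)‖
        ≤ ‖(x (t + h) - x t - h • v t) + (r * h ^ 2) • v t‖ + ‖xt - xq‖ := norm_sub_le _ _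
      _ ≤ (‖x (t + h) - x t - h • v t‖ + ‖(r * h ^ 2) • v t‖) + ‖xt - xq‖ :=
          add_le_add (norm_add_le _ _) le_rfl
      _ ≤ (2 * M + (r * M + 3 * L' * V) + L' * (6 * G' + 3 * (1 + r) * V) + 1) * h ^ 2 := by
          nlinarith [key1, n1, hnd, mul_nonneg c1 hh2', mul_nonneg c2 hh2',
            mul_nonneg c3 hh2', mul_nonneg hG'0 hh2', mul_nonneg (mul_nonneg hr.le hV) hh2']
  · -- velocity estimate
    have split2 : v (t + h) - (1 / h) • (((x t + (h * (1 - r * h)) • v t) + xt - xq) - x t)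
        = (v (t + h) - v t - h • a) + h • (gradient f xq - gradient f (x t))
        + h • (gradient g xt - gradient g (x t)) + h • (gradient w xq - gradient w (x t)) := by
      have hrw : ((x t + (h * (1 - r * h)) • v t) + xt - xq) - x t
          = (h * (1 - r * h)) • v t + (xt - xq) := by abel
      rw [hrw, hd, hadef]
      simp only [hF'def]
      match_scalars <;> field_simp <;> ring
    rw [split2]
    have bnd : ∀ z : EuclideanSpace ℝ (Fin n), ∀ K : ℝ, ‖z‖ ≤ K * h → ‖h • z‖ ≤ K * h ^ 2 := by
      intro z K hz
      rw [norm_smul, Real.norm_of_nonneg hh.le]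
      nlinarith [norm_nonneg z]
    have n2 : ‖h • (gradient f xq - gradient f (x t))‖ ≤ L' * (G' + (1 + r) * V) * h ^ 2 := by
      refine bnd _ _ ?_
      have := (hfL' xq (x t)).trans (mul_le_mul_of_nonneg_left hqxt hL'0)
      calc ‖gradient f xq - gradient f (x t)‖ ≤ L' * ((G' + (1 + r) * V) * h) := this
        _ = L' * (G' + (1 + r) * V) * h := by ring
    have n3 : ‖h • (gradient g xt - gradient g (x t))‖ ≤ L' * (4 * G' + (1 + r) * V) * h ^ 2 := by
      refine bnd _ _ ?_
      have := (hgL' xt (x t)).trans (mul_le_mul_of_nonneg_left htxt hL'0)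
      calc ‖gradient g xt - gradient g (x t)‖ ≤ L' * ((4 * G' + (1 + r) * V) * h) := this
        _ = L' * (4 * G' + (1 + r) * V) * h := by ring
    have n4 : ‖h • (gradient w xq - gradient w (x t))‖ ≤ L' * (G' + (1 + r) * V) * h ^ 2 := by
      refine bnd _ _ ?_
      have := (hwL' xq (x t)).trans (mul_le_mul_of_nonneg_left hqxt hL'0)
      calc ‖gradient w xq - gradient w (x t)‖ ≤ L' * ((G' + (1 + r) * V) * h) := this
        _ = L' * (G' + (1 + r) * V) * h := by ring
    calc ‖(v (t + h) - v t - h • a) + h • (gradient f xq - gradient f (x t))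
            + h • (gradient g xt - gradient g (x t)) + h • (gradient w xq - gradient w (x t))‖
        ≤ ‖(v (t + h) - v t - h • a) + h • (gradient f xq - gradient f (x t))
            + h • (gradient g xt - gradient g (x t))‖ +
          ‖h • (gradient w xq - gradient w (x t))‖ := norm_add_le _ _
      _ ≤ (‖(v (t + h) - v t - h • a) + h • (gradient f xq - gradient f (x t))‖ +
            ‖h • (gradient g xt - gradient g (x t))‖) +
          ‖h • (gradient w xq - gradient w (x t))‖ := add_le_add (norm_add_le _ _) le_rfl
      _ ≤ ((‖v (t + h) - v t - h • a‖ + ‖h • (gradient f xq - gradient f (x t))‖) +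
            ‖h • (gradient g xt - gradient g (x t))‖) +
          ‖h • (gradient w xq - gradient w (x t))‖ := by
            gcongr
            exact norm_add_le _ _
      _ ≤ (2 * M + (r * M + 3 * L' * V) + L' * (6 * G' + 3 * (1 + r) * V) + 1) * h ^ 2 := by
          nlinarith [key2, n2, n3, n4, mul_nonneg hM0 hh2', mul_nonneg c1 hh2',
            mul_nonneg c2 hh2', mul_nonneg c3 hh2']
end

section
/- Let r > 0 and let f, g, w : ℝⁿ → ℝ be differentiable, with each of ∇f, ∇g, ∇w L-Lipschitz and bounded in norm by G. Let c ∈ ℝⁿ, t ∈ ℝ, h₀ ∈ (0,1], V ≥ 0, and let x, v : ℝ → ℝⁿ be differentiable on [t, t+h₀] with x′(s) = v(s), v′(s) = −r v(s) − (∇f + ∇g + ∇w)(x(s)), and ‖v(s)‖ ≤ V for all s ∈ [t, t+h₀] (a solution of the accelerated gradient flow with constant damping). Then there exists a constant C > 0 such that for every h ∈ (0, h₀] the following holds: with λ := h², x̂ := x(t) + h(1 − rh)v(t), the ADMM step from x̂ with balance coefficient c, namely x½ with x½ + λ∇f(x½) = x̂ − λ∇w(x̂) + λc and x⁺ with x⁺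 + λ∇g(x⁺) = x½ − λc, and v⁺ := (x⁺ − x(t))/h, one has ‖x(t+h) − x⁺‖ ≤ C h² and ‖v(t+h) − v⁺‖ ≤ C h². (Hence the accelerated ADMM extension with constant damping is a first-order integrator of the accelerated gradient flow ẍ + rẋ = −∇(f+g+w)(x).) -/
set_option maxHeartbeats 1000000 in
/-- The accelerated ADMM extension with constant damping `r` is a
first-order integrator of the accelerated gradient flow `ẍ + rẋ = -∇(f+g+w)(x)`. -/
theorem stmt_13 {n : ℕ} (r : ℝ) (hr : 0 < r)
    (f g w : EuclideanSpace ℝ (Fin n) → ℝ)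
    (hfd : Differentiable ℝ f) (hgd : Differentiable ℝ g) (hwd : Differentiable ℝ w)
    (L G : ℝ)
    (hfL : ∀ u v : EuclideanSpace ℝ (Fin n), ‖gradient f u - gradient f v‖ ≤ L * ‖u - v‖)
    (hgL : ∀ u v : EuclideanSpace ℝ (Fin n), ‖gradient g u - gradient g v‖ ≤ L * ‖u - v‖)
    (hwL : ∀ u v : EuclideanSpace ℝ (Fin n), ‖gradient w u - gradient w v‖ ≤ L * ‖u - v‖)
    (hfG : ∀ u, ‖gradient f u‖ ≤ G)
    (hgG : ∀ u, ‖gradient g u‖ ≤ G)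
    (hwG : ∀ u, ‖gradient w u‖ ≤ G)
    (c : EuclideanSpace ℝ (Fin n))
    (t : ℝ) (h₀ : ℝ) (hh₀ : h₀ ∈ Set.Ioc (0 : ℝ) 1) (V : ℝ) (hV : 0 ≤ V)
    (x v : ℝ → EuclideanSpace ℝ (Fin n))
    (hx : ∀ s ∈ Set.Icc t (t + h₀),
      HasDerivWithinAt x (v s) (Set.Icc t (t + h₀)) s)
    (hv : ∀ s ∈ Set.Icc t (t + h₀), HasDerivWithinAt v
      (-(r • v s) - (gradient f (x s) + gradient g (x s) + gradient w (x s)))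
      (Set.Icc t (t + h₀)) s)
    (hVb : ∀ s ∈ Set.Icc t (t + h₀), ‖v s‖ ≤ V) :
    ∃ C > 0, ∀ h : ℝ, 0 < h → h ≤ h₀ →
      ∀ xh xp : EuclideanSpace ℝ (Fin n),
        xh + (h ^ 2) • gradient f xh =
          (x t + (h * (1 - r * h)) • v t)
            - (h ^ 2) • gradient w (x t + (h * (1 - r * h)) • v t) + (h ^ 2) • c →
        xp + (h ^ 2) • gradient g xp = xh - (h ^ 2) • c →
        ‖x (t + h) - xp‖ ≤ C * h ^ 2 ∧
        ‖v (t + h) - (1 / h) • (xp - x t)‖ ≤ C * h ^ 2 := by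
  obtain ⟨hh₀pos, hh₀le⟩ := hh₀
  have hG0 : 0 ≤ G := le_trans (norm_nonneg _) (hfG 0)
  set L₀ : ℝ := max L 0 with hL₀def
  have hL₀0 : 0 ≤ L₀ := le_max_right _ _
  have hfL' : ∀ u v' : EuclideanSpace ℝ (Fin n),
      ‖gradient f u - gradient f v'‖ ≤ L₀ * ‖u - v'‖ := fun u v' =>
    (hfL u v').trans (mul_le_mul_of_nonneg_right (le_max_left _ _) (norm_nonneg _))
  have hgL' : ∀ u v' : EuclideanSpace ℝ (Fin n),
      ‖gradient g u - gradient g v'‖ ≤ L₀ * ‖u - v'‖ := fun u v' =>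
    (hgL u v').trans (mul_le_mul_of_nonneg_right (le_max_left _ _) (norm_nonneg _))
  have hwL' : ∀ u v' : EuclideanSpace ℝ (Fin n),
      ‖gradient w u - gradient w v'‖ ≤ L₀ * ‖u - v'‖ := fun u v' =>
    (hwL u v').trans (mul_le_mul_of_nonneg_right (le_max_left _ _) (norm_nonneg _))
  set M : ℝ := r * V + 3 * G with hMdef
  have hM0 : 0 ≤ M := by nlinarith [mul_nonneg hr.le hV]
  set K : ℝ := (1 + r) * V + 3 * G + ‖c‖ with hKdef
  have hK0 : 0 ≤ K := by nlinarith [mul_nonneg (by linarith : (0:ℝ) ≤ 1 + r) hV, norm_nonneg c]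
  set N : ℝ := r * M + 3 * L₀ * V with hNdef
  have hN0 : 0 ≤ N := by nlinarith [mul_nonneg hr.le hM0, mul_nonneg hL₀0 hV]
  refine ⟨M + r * V + 3 * G + (N + 3 * L₀ * K) + 1, by
    nlinarith [mul_nonneg hr.le hV, mul_nonneg hL₀0 hK0], ?_⟩
  intro h hpos hle xh xp e1 e2
  have hh1 : h ≤ 1 := hle.trans hh₀le
  have hsub : Set.Icc t (t + h) ⊆ Set.Icc t (t + h₀) := Set.Icc_subset_Icc le_rfl (by linarith)
  have hx' : ∀ s ∈ Set.Icc t (t + h), HasDerivWithinAt x (v s) (Set.Icc t (t + h)) s :=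
    fun s hs => (hx s (hsub hs)).mono hsub
  have hv' : ∀ s ∈ Set.Icc t (t + h), HasDerivWithinAt v
      (-(r • v s) - (gradient f (x s) + gradient g (x s) + gradient w (x s)))
      (Set.Icc t (t + h)) s := fun s hs => (hv s (hsub hs)).mono hsub
  have memt : t ∈ Set.Icc t (t + h) := Set.left_mem_Icc.2 (by linarith)
  have memth : t + h ∈ Set.Icc t (t + h) := Set.right_mem_Icc.2 (by linarith)
  have cvx : Convex ℝ (Set.Icc t (t + h)) := convex_Icc t (t + h)
  have hst : ∀ s ∈ Set.Icc t (t + h), ‖s - t‖ ≤ h := fun s hs => by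
    rw [Real.norm_eq_abs, abs_of_nonneg (by linarith [hs.1])]
    linarith [hs.2]
  -- ‖x s - x t‖ ≤ V * h
  have Ax : ∀ s ∈ Set.Icc t (t + h), ‖x s - x t‖ ≤ V * h := fun s hs => by
    have := cvx.norm_image_sub_le_of_norm_hasDerivWithin_le hx'
      (fun u hu => hVb u (hsub hu)) memt hs
    exact this.trans (mul_le_mul_of_nonneg_left (hst s hs) hV)
  -- bound on the derivative of v
  have hvdb : ∀ s ∈ Set.Icc t (t + h),
      ‖-(r • v s) - (gradient f (x s) + gradient g (x s) + gradient w (x s))‖ ≤ M := by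
    intro s hs
    have h1 : ‖-(r • v s)‖ ≤ r * V := by
      rw [norm_neg, norm_smul, Real.norm_eq_abs, abs_of_nonneg hr.le]
      exact mul_le_mul_of_nonneg_left (hVb s (hsub hs)) hr.le
    have h2 : ‖gradient f (x s) + gradient g (x s) + gradient w (x s)‖ ≤ 3 * G := by
      calc ‖gradient f (x s) + gradient g (x s) + gradient w (x s)‖
          ≤ ‖gradient f (x s) + gradient g (x s)‖ + ‖gradient w (x s)‖ := norm_add_le _ _
        _ ≤ ‖gradient f (x s)‖ + ‖gradient g (x s)‖ + ‖gradient w (x s)‖ :=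
            add_le_add_left (norm_add_le _ _) _
        _ ≤ 3 * G := by linarith [hfG (x s), hgG (x s), hwG (x s)]
    calc ‖-(r • v s) - (gradient f (x s) + gradient g (x s) + gradient w (x s))‖
        ≤ ‖-(r • v s)‖ + ‖gradient f (x s) + gradient g (x s) + gradient w (x s)‖ :=
          norm_sub_le _ _
      _ ≤ M := by rw [hMdef]; linarith
  -- ‖v s - v t‖ ≤ M * h
  have Av : ∀ s ∈ Set.Icc t (t + h), ‖v s - v t‖ ≤ M * h := fun s hs => by
    have := cvx.norm_image_sub_le_of_norm_hasDerivWithin_le hv' hvdb memt hs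
    exact this.trans (mul_le_mul_of_nonneg_left (hst s hs) hM0)
  -- second-order Taylor bound for x
  have A3 : ‖x (t + h) - x t - h • v t‖ ≤ M * h ^ 2 := by
    have hy : ∀ s ∈ Set.Icc t (t + h),
        HasDerivWithinAt (fun s => x s - s • v t) (v s - v t) (Set.Icc t (t + h)) s := by
      intro s hs
      exact (hx' s hs).sub (by
        simpa using (hasDerivWithinAt_id s (Set.Icc t (t + h))).smul_const (v t))
    have := cvx.norm_image_sub_le_of_norm_hasDerivWithin_le hy Av memt memth
    have hE : (x (t + h) - (t + h) • v t) - (x t - t • v t) = x (t + h) - x t - h • v t := by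
      module
    rw [hE] at this
    calc ‖x (t + h) - x t - h • v t‖ ≤ M * h * ‖t + h - t‖ := this
      _ = M * h ^ 2 := by
          rw [show t + h - t = h by ring, Real.norm_eq_abs, abs_of_nonneg hpos.le]; ring
  -- bound on the variation of the derivative of v
  set vd : EuclideanSpace ℝ (Fin n) :=
    -(r • v t) - (gradient f (x t) + gradient g (x t) + gradient w (x t)) with hvddef
  have A4 : ∀ s ∈ Set.Icc t (t + h),
      ‖(-(r • v s) - (gradient f (x s) + gradient g (x s) + gradient w (x s))) - vd‖
        ≤ N * h := by
    intro s hs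
    have hdiff : (-(r • v s) - (gradient f (x s) + gradient g (x s) + gradient w (x s))) - vd
        = -(r • (v s - v t)) - ((gradient f (x s) - gradient f (x t))
            + (gradient g (x s) - gradient g (x t))
            + (gradient w (x s) - gradient w (x t))) := by
      rw [hvddef]; module
    have b0 : ‖-(r • (v s - v t))‖ ≤ r * (M * h) := by
      rw [norm_neg, norm_smul, Real.norm_eq_abs, abs_of_nonneg hr.le]
      exact mul_le_mul_of_nonneg_left (Av s hs) hr.le
    have b1 : ‖gradient f (x s) - gradient f (x t)‖ ≤ L₀ * (V * h) :=
      (hfL' _ _).trans (mul_le_mul_of_nonneg_left (Ax s hs) hL₀0)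
    have b2 : ‖gradient g (x s) - gradient g (x t)‖ ≤ L₀ * (V * h) :=
      (hgL' _ _).trans (mul_le_mul_of_nonneg_left (Ax s hs) hL₀0)
    have b3 : ‖gradient w (x s) - gradient w (x t)‖ ≤ L₀ * (V * h) :=
      (hwL' _ _).trans (mul_le_mul_of_nonneg_left (Ax s hs) hL₀0)
    have tr : ‖(gradient f (x s) - gradient f (x t)) + (gradient g (x s) - gradient g (x t))
        + (gradient w (x s) - gradient w (x t))‖
        ≤ ‖gradient f (x s) - gradient f (x t)‖ + ‖gradient g (x s) - gradient g (x t)‖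
          + ‖gradient w (x s) - gradient w (x t)‖ :=
      (norm_add_le _ _).trans (add_le_add_left (norm_add_le _ _) _)
    rw [hdiff]
    calc ‖-(r • (v s - v t)) - ((gradient f (x s) - gradient f (x t))
            + (gradient g (x s) - gradient g (x t))
            + (gradient w (x s) - gradient w (x t)))‖
        ≤ ‖-(r • (v s - v t))‖ + ‖(gradient f (x s) - gradient f (x t))
            + (gradient g (x s) - gradient g (x t))
            + (gradient w (x s) - gradient w (x t))‖ := norm_sub_le _ _
      _ ≤ r * (M * h) + (L₀ * (V * h) + L₀ * (V * h) + L₀ * (V * h)) := by linarith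
      _ = N * h := by rw [hNdef]; ring
  -- second-order Taylor bound for v
  have A5 : ‖v (t + h) - v t - h • vd‖ ≤ N * h ^ 2 := by
    have hz : ∀ s ∈ Set.Icc t (t + h),
        HasDerivWithinAt (fun s => v s - s • vd)
          ((-(r • v s) - (gradient f (x s) + gradient g (x s) + gradient w (x s))) - vd)
          (Set.Icc t (t + h)) s := by
      intro s hs
      exact (hv' s hs).sub (by
        simpa using (hasDerivWithinAt_id s (Set.Icc t (t + h))).smul_const vd)
    have := cvx.norm_image_sub_le_of_norm_hasDerivWithin_le hz A4 memt memth
    have hE : (v (t + h) - (t + h) • vd) - (v t - t • vd) = v (t + h) - v t - h • vd := by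
      module
    rw [hE] at this
    calc ‖v (t + h) - v t - h • vd‖ ≤ N * h * ‖t + h - t‖ := this
      _ = N * h ^ 2 := by
          rw [show t + h - t = h by ring, Real.norm_eq_abs, abs_of_nonneg hpos.le]; ring
  -- algebra of the ADMM step
  set xhat : EuclideanSpace ℝ (Fin n) := x t + (h * (1 - r * h)) • v t with hxhatdef
  have exh : xh = xhat - (h ^ 2) • gradient w xhat + (h ^ 2) • c - (h ^ 2) • gradient f xh :=
    eq_sub_of_add_eq e1
  have exp2 : xp = xh - (h ^ 2) • c - (h ^ 2) • gradient g xp := eq_sub_of_add_eq e2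
  have key : xp - xhat = -((h ^ 2) • gradient f xh) - (h ^ 2) • gradient g xp
      - (h ^ 2) • gradient w xhat := by
    conv_lhs => rw [exp2, exh]
    abel
  have hsm : ∀ u : EuclideanSpace ℝ (Fin n), ‖(h ^ 2) • u‖ = h ^ 2 * ‖u‖ := fun u => by
    rw [norm_smul, Real.norm_eq_abs, abs_of_nonneg (sq_nonneg h)]
  have bf : ‖(h ^ 2) • gradient f xh‖ ≤ G * h ^ 2 := by
    rw [hsm, mul_comm]; exact mul_le_mul_of_nonneg_right (hfG xh) (sq_nonneg h)
  have bg : ‖(h ^ 2) • gradient g xp‖ ≤ G * h ^ 2 := by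
    rw [hsm, mul_comm]; exact mul_le_mul_of_nonneg_right (hgG xp) (sq_nonneg h)
  have bw : ‖(h ^ 2) • gradient w xhat‖ ≤ G * h ^ 2 := by
    rw [hsm, mul_comm]; exact mul_le_mul_of_nonneg_right (hwG xhat) (sq_nonneg h)
  have hxpxhat : ‖xp - xhat‖ ≤ 3 * G * h ^ 2 := by
    rw [key]
    have tr : ‖-((h ^ 2) • gradient f xh) - (h ^ 2) • gradient g xp
        - (h ^ 2) • gradient w xhat‖
        ≤ ‖(h ^ 2) • gradient f xh‖ + ‖(h ^ 2) • gradient g xp‖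
          + ‖(h ^ 2) • gradient w xhat‖ := by
      calc ‖-((h ^ 2) • gradient f xh) - (h ^ 2) • gradient g xp
          - (h ^ 2) • gradient w xhat‖
          ≤ ‖-((h ^ 2) • gradient f xh) - (h ^ 2) • gradient g xp‖
            + ‖(h ^ 2) • gradient w xhat‖ := norm_sub_le _ _
        _ ≤ ‖-((h ^ 2) • gradient f xh)‖ + ‖(h ^ 2) • gradient g xp‖
            + ‖(h ^ 2) • gradient w xhat‖ := add_le_add_left (norm_sub_le _ _) _
        _ = _ := by rw [norm_neg]
    linarith
  have hxhxhat : ‖xh - xhat‖ ≤ (2 * G + ‖c‖) * h ^ 2 := by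
    have hE : xh - xhat = -((h ^ 2) • gradient w xhat) + (h ^ 2) • c
        - (h ^ 2) • gradient f xh := by
      conv_lhs => rw [exh]
      abel
    rw [hE]
    have bc : ‖(h ^ 2) • c‖ = h ^ 2 * ‖c‖ := hsm c
    have tr : ‖-((h ^ 2) • gradient w xhat) + (h ^ 2) • c - (h ^ 2) • gradient f xh‖
        ≤ ‖(h ^ 2) • gradient w xhat‖ + ‖(h ^ 2) • c‖ + ‖(h ^ 2) • gradient f xh‖ := by
      calc ‖-((h ^ 2) • gradient w xhat) + (h ^ 2) • c - (h ^ 2) • gradient f xh‖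
          ≤ ‖-((h ^ 2) • gradient w xhat) + (h ^ 2) • c‖ + ‖(h ^ 2) • gradient f xh‖ :=
            norm_sub_le _ _
        _ ≤ ‖-((h ^ 2) • gradient w xhat)‖ + ‖(h ^ 2) • c‖ + ‖(h ^ 2) • gradient f xh‖ :=
            add_le_add_left (norm_add_le _ _) _
        _ = _ := by rw [norm_neg]
    linarith [bw, bc, bf, tr]
  have hxhatxtEq : xhat - x t = (h * (1 - r * h)) • v t := by
    rw [hxhatdef]; abel
  have hxhatxt : ‖xhat - x t‖ ≤ (1 + r) * V * h := by
    rw [hxhatxtEq, norm_smul, Real.norm_eq_abs]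
    have habs : |h * (1 - r * h)| ≤ h * (1 + r) := by
      rw [abs_mul, abs_of_nonneg hpos.le]
      have h1 : |1 - r * h| ≤ 1 + r := by
        rw [abs_le]
        constructor <;> linarith [mul_pos hr hpos, mul_le_mul_of_nonneg_left hh1 hr.le]
      exact mul_le_mul_of_nonneg_left h1 hpos.le
    calc |h * (1 - r * h)| * ‖v t‖ ≤ (h * (1 + r)) * V :=
        mul_le_mul habs (hVb t (hsub memt)) (norm_nonneg _) (by positivity)
      _ = (1 + r) * V * h := by ring
  -- first conclusion
  have hh2 : h ^ 2 ≤ h := by nlinarith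
  have bx : ‖x (t + h) - xp‖ ≤ (M + r * V + 3 * G) * h ^ 2 := by
    have hdec : x (t + h) - xp = (x (t + h) - x t - h • v t)
        + ((x t + h • v t) - xhat) + (xhat - xp) := by abel
    have hmidE : (x t + h • v t) - xhat = (r * h ^ 2) • v t := by
      rw [hxhatdef]; module
    have hmid : ‖(x t + h • v t) - xhat‖ ≤ r * V * h ^ 2 := by
      rw [hmidE, norm_smul, Real.norm_eq_abs, abs_of_nonneg (by positivity)]
      calc r * h ^ 2 * ‖v t‖ ≤ r * h ^ 2 * V :=
          mul_le_mul_of_nonneg_left (hVb t (hsub memt)) (by positivity)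
        _ = r * V * h ^ 2 := by ring
    have hlast : ‖xhat - xp‖ ≤ 3 * G * h ^ 2 := by rw [norm_sub_rev]; exact hxpxhat
    have tr : ‖x (t + h) - xp‖ ≤ ‖x (t + h) - x t - h • v t‖
        + ‖(x t + h • v t) - xhat‖ + ‖xhat - xp‖ := by
      rw [hdec]
      exact (norm_add_le _ _).trans (add_le_add_left (norm_add_le _ _) _)
    nlinarith
  -- distances to x t, for the Lipschitz estimates
  have hxhxt : ‖xh - x t‖ ≤ K * h := by
    have hE : xh - x t = (xh - xhat) + (xhat - x t) := by abel
    have tr : ‖xh - x t‖ ≤ ‖xh - xhat‖ + ‖xhat - x t‖ := by rw [hE]; exact norm_add_le _ _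
    have : (2 * G + ‖c‖) * h ^ 2 ≤ (2 * G + ‖c‖) * h :=
      mul_le_mul_of_nonneg_left hh2 (by positivity)
    rw [hKdef]; nlinarith [norm_nonneg c, mul_nonneg hG0 hpos.le]
  have hxpxt : ‖xp - x t‖ ≤ K * h := by
    have hE : xp - x t = (xp - xhat) + (xhat - x t) := by abel
    have tr : ‖xp - x t‖ ≤ ‖xp - xhat‖ + ‖xhat - x t‖ := by rw [hE]; exact norm_add_le _ _
    have : 3 * G * h ^ 2 ≤ 3 * G * h := mul_le_mul_of_nonneg_left hh2 (by positivity)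
    rw [hKdef]; nlinarith [norm_nonneg c, mul_nonneg (norm_nonneg c) hpos.le]
  have hxhatxt' : ‖xhat - x t‖ ≤ K * h := by
    rw [hKdef]
    nlinarith [norm_nonneg c, mul_nonneg (norm_nonneg c) hpos.le, mul_nonneg hG0 hpos.le,
      hxhatxt]
  -- key identity for the velocity
  have hxpxt' : xp - x t = (xhat - x t) - (h ^ 2) • gradient f xh
      - (h ^ 2) • gradient g xp - (h ^ 2) • gradient w xhat := by
    have hE : xp - x t = (xp - xhat) + (xhat - x t) := by abel
    rw [hE, key]; abel
  have hid : v (t + h) - (1 / h) • (xp - x t) = (v (t + h) - v t - h • vd)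
      + (h • (gradient f xh - gradient f (x t)) + h • (gradient g xp - gradient g (x t))
        + h • (gradient w xhat - gradient w (x t))) := by
    conv_lhs => rw [hxpxt', hxhatxtEq]
    rw [hvddef]
    match_scalars <;> field_simp <;> ring
  have c1 : ‖h • (gradient f xh - gradient f (x t))‖ ≤ L₀ * K * h ^ 2 := by
    rw [norm_smul, Real.norm_eq_abs, abs_of_nonneg hpos.le]
    calc h * ‖gradient f xh - gradient f (x t)‖ ≤ h * (L₀ * (K * h)) :=
        mul_le_mul_of_nonneg_left
          ((hfL' xh (x t)).trans (mul_le_mul_of_nonneg_left hxhxt hL₀0)) hpos.le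
      _ = L₀ * K * h ^ 2 := by ring
  have c2 : ‖h • (gradient g xp - gradient g (x t))‖ ≤ L₀ * K * h ^ 2 := by
    rw [norm_smul, Real.norm_eq_abs, abs_of_nonneg hpos.le]
    calc h * ‖gradient g xp - gradient g (x t)‖ ≤ h * (L₀ * (K * h)) :=
        mul_le_mul_of_nonneg_left
          ((hgL' xp (x t)).trans (mul_le_mul_of_nonneg_left hxpxt hL₀0)) hpos.le
      _ = L₀ * K * h ^ 2 := by ring
  have c3 : ‖h • (gradient w xhat - gradient w (x t))‖ ≤ L₀ * K * h ^ 2 := by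
    rw [norm_smul, Real.norm_eq_abs, abs_of_nonneg hpos.le]
    calc h * ‖gradient w xhat - gradient w (x t)‖ ≤ h * (L₀ * (K * h)) :=
        mul_le_mul_of_nonneg_left
          ((hwL' xhat (x t)).trans (mul_le_mul_of_nonneg_left hxhatxt' hL₀0)) hpos.le
      _ = L₀ * K * h ^ 2 := by ring
  have bv : ‖v (t + h) - (1 / h) • (xp - x t)‖ ≤ (N + 3 * L₀ * K) * h ^ 2 := by
    rw [hid]
    have tr : ‖(v (t + h) - v t - h • vd)
        + (h • (gradient f xh - gradient f (x t)) + h • (gradient g xp - gradient g (x t))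
          + h • (gradient w xhat - gradient w (x t)))‖
        ≤ ‖v (t + h) - v t - h • vd‖ + (‖h • (gradient f xh - gradient f (x t))‖
          + ‖h • (gradient g xp - gradient g (x t))‖
          + ‖h • (gradient w xhat - gradient w (x t))‖) := by
      refine (norm_add_le _ _).trans (add_le_add_right ?_ _)
      exact (norm_add_le _ _).trans (add_le_add_left (norm_add_le _ _) _)
    linarith [tr, A5, c1, c2, c3]
  constructor
  · refine bx.trans ?_
    have : M + r * V + 3 * G ≤ M + r * V + 3 * G + (N + 3 * L₀ * K) + 1 := by
      linarith [hN0, mul_nonneg hL₀0 hK0]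
    exact mul_le_mul_of_nonneg_right this (sq_nonneg h)
  · refine bv.trans ?_
    have : N + 3 * L₀ * K ≤ M + r * V + 3 * G + (N + 3 * L₀ * K) + 1 := by
      linarith [hM0, mul_nonneg hr.le hV, hG0]
    exact mul_le_mul_of_nonneg_right this (sq_nonneg h)
end

section
/- Let r > 0 and let g, w : ℝⁿ → ℝ be differentiable, with each of ∇g, ∇w L-Lipschitz and bounded in norm by G. Let t ∈ ℝ, h₀ ∈ (0,1], V ≥ 0, and let x, v : ℝ → ℝⁿ be differentiable on [t, t+h₀] with x′(s) = v(s), v′(s) = −r v(s) − (∇g + ∇w)(x(s)), and ‖v(s)‖ ≤ V for all s ∈ [t, t+h₀] (a solution of the accelerated gradient flow with constant damping). Then there exists a constant C > 0 such that for every h ∈ (0, h₀] the following holds: with λ := h², x̂ := x(t) + h(1 − rh)v(t), the Tseng step from x̂, namely x½ with x½ + λ∇g(x½) = x̂ − λ∇w(x̂) and x⁺ := x½ − λ( ∇w(x½) − ∇w(x̂) ), and v⁺ := (x⁺ − x(t))/h, one has ‖x(t+h) − x⁺‖ ≤ C h² and ‖v(t+h) − v⁺‖ ≤ C h². (Hence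 the accelerated Tseng method with constant damping is a first-order integrator of the accelerated gradient flow ẍ + rẋ = −∇(g+w)(x).) -/
set_option maxHeartbeats 1000000

section Aux

variable {E : Type*} [NormedAddCommGroup E] [Module ℝ E]

lemma aux_e1 (a b s0 sg : E) (c : ℝ) (h : a + c • sg = b - c • s0) :
    b - a = c • s0 + c • sg := by
  have ha : a = b - c • s0 - c • sg := by rw [← h]; abel
  rw [ha]; abel

lemma aux_e2 (a b sg sw s0 : E) (c : ℝ) (h : a + c • sg = b - c • s0) :
    a - c • (sw - s0) = b - c • (sg + sw) := by
  have ha : a = b - c • s0 - c • sg := by rw [← h]; abel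
  rw [ha]; module

lemma aux_x (X Xt vt sg sw : E) (r h t : ℝ) :
    X - ((Xt + (h * (1 - r * h)) • vt) - (h ^ 2) • (sg + sw)) =
      ((X - ((t + h) - t) • vt) - (Xt - (t - t) • vt)) + (r * h ^ 2) • vt
        + (h ^ 2) • (sg + sw) := by
  module

lemma aux_v1 (Xt vt sg sw : E) (r h : ℝ) :
    ((Xt + (h * (1 - r * h)) • vt) - (h ^ 2) • (sg + sw)) - Xt =
      h • (vt + h • (-(r • vt) - (sg + sw))) := by
  module

lemma aux_v2 (Vth vt A : E) (h t : ℝ) :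
    Vth - (vt + h • A) = (Vth - ((t + h) - t) • A) - (vt - (t - t) • A) := by
  module

lemma aux_d (vs vt gx wx sg sw : E) (r : ℝ) :
    (-(r • vs) - (gx + wx)) - (-(r • vt) - (sg + sw)) =
      -(r • (vs - vt)) - ((gx - sg) + (wx - sw)) := by
  module

end Aux

/-- The accelerated Tseng method with constant damping `r` is a
first-order integrator of the accelerated gradient flow `ẍ + rẋ = -∇(g+w)(x)`. -/
theorem stmt_14 {n : ℕ} (r : ℝ) (hr : 0 < r)
    (g w : EuclideanSpace ℝ (Fin n) → ℝ)
    (hgd : Differentiable ℝ g) (hwd : Differentiable ℝ w)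
    (L G : ℝ)
    (hgL : ∀ u v : EuclideanSpace ℝ (Fin n), ‖gradient g u - gradient g v‖ ≤ L * ‖u - v‖)
    (hwL : ∀ u v : EuclideanSpace ℝ (Fin n), ‖gradient w u - gradient w v‖ ≤ L * ‖u - v‖)
    (hgG : ∀ u, ‖gradient g u‖ ≤ G)
    (hwG : ∀ u, ‖gradient w u‖ ≤ G)
    (t : ℝ) (h₀ : ℝ) (hh₀ : h₀ ∈ Set.Ioc (0 : ℝ) 1) (V : ℝ) (hV : 0 ≤ V)
    (x v : ℝ → EuclideanSpace ℝ (Fin n))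
    (hx : ∀ s ∈ Set.Icc t (t + h₀),
      HasDerivWithinAt x (v s) (Set.Icc t (t + h₀)) s)
    (hv : ∀ s ∈ Set.Icc t (t + h₀), HasDerivWithinAt v
      (-(r • v s) - (gradient g (x s) + gradient w (x s)))
      (Set.Icc t (t + h₀)) s)
    (hVb : ∀ s ∈ Set.Icc t (t + h₀), ‖v s‖ ≤ V) :
    ∃ C > 0, ∀ h : ℝ, 0 < h → h ≤ h₀ →
      ∀ xh : EuclideanSpace ℝ (Fin n),
        xh + (h ^ 2) • gradient g xh =
          (x t + (h * (1 - r * h)) • v t)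
            - (h ^ 2) • gradient w (x t + (h * (1 - r * h)) • v t) →
        ‖x (t + h) - (xh - (h ^ 2) • (gradient w xh
            - gradient w (x t + (h * (1 - r * h)) • v t)))‖ ≤ C * h ^ 2 ∧
        ‖v (t + h) - (1 / h) • ((xh - (h ^ 2) • (gradient w xh
            - gradient w (x t + (h * (1 - r * h)) • v t))) - x t)‖ ≤ C * h ^ 2 := by
  obtain ⟨hh₀0, hh₀1⟩ := hh₀
  have hG : (0:ℝ) ≤ G := le_trans (norm_nonneg _) (hgG 0)
  set L' : ℝ := max L 0 with hL'def
  have hL' : (0:ℝ) ≤ L' := le_max_right _ _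
  have hLL' : L ≤ L' := le_max_left _ _
  set M : ℝ := r * V + 2 * G with hMdef
  set K : ℝ := (2 + r) * V + 2 * G with hKdef
  set D : ℝ := r * M + 2 * L' * K with hDdef
  have hrV : 0 ≤ r * V := mul_nonneg hr.le hV
  have hM0 : 0 ≤ M := by rw [hMdef]; linarith
  have hK0 : 0 ≤ K := by
    rw [hKdef]
    have : 0 ≤ (2 + r) * V := mul_nonneg (by linarith) hV
    linarith
  have hD0 : 0 ≤ D := by
    rw [hDdef]
    have h1 : 0 ≤ r * M := mul_nonneg hr.le hM0
    have h2 : 0 ≤ 2 * L' * K := mul_nonneg (mul_nonneg (by norm_num) hL') hK0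
    linarith
  refine ⟨(M + r * V + 2 * G) + D + 1, by linarith, ?_⟩
  intro h hh0 hhh₀ xh hxh
  set xhat : EuclideanSpace ℝ (Fin n) := x t + (h * (1 - r * h)) • v t with hxhatdef
  have hth : t + h ≤ t + h₀ := by linarith
  have hI : Set.Icc t (t+h) ⊆ Set.Icc t (t+h₀) := Set.Icc_subset_Icc le_rfl hth
  have htmem : t ∈ Set.Icc t (t+h) := ⟨le_rfl, by linarith⟩
  have hthmem : t + h ∈ Set.Icc t (t+h) := ⟨by linarith, le_rfl⟩
  have hx' : ∀ s ∈ Set.Icc t (t+h), HasDerivWithinAt x (v s) (Set.Icc t (t+h)) s :=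
    fun s hs => (hx s (hI hs)).mono hI
  have hv' : ∀ s ∈ Set.Icc t (t+h), HasDerivWithinAt v
      (-(r • v s) - (gradient g (x s) + gradient w (x s))) (Set.Icc t (t+h)) s :=
    fun s hs => (hv s (hI hs)).mono hI
  have hVb' : ∀ s ∈ Set.Icc t (t+h), ‖v s‖ ≤ V := fun s hs => hVb s (hI hs)
  have hvderiv : ∀ s ∈ Set.Icc t (t+h),
      ‖-(r • v s) - (gradient g (x s) + gradient w (x s))‖ ≤ M := by
    intro s hs
    have h1 : ‖-(r • v s)‖ = r * ‖v s‖ := by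
      rw [norm_neg, norm_smul, Real.norm_eq_abs, abs_of_pos hr]
    have h2 := norm_add_le (gradient g (x s)) (gradient w (x s))
    have h3 := hgG (x s); have h4 := hwG (x s)
    have h5 := hVb' s hs
    have h6 : r * ‖v s‖ ≤ r * V := mul_le_mul_of_nonneg_left h5 hr.le
    calc ‖-(r • v s) - (gradient g (x s) + gradient w (x s))‖
        ≤ ‖-(r • v s)‖ + ‖gradient g (x s) + gradient w (x s)‖ := norm_sub_le _ _
      _ ≤ r * V + (G + G) := by rw [h1]; linarith
      _ = M := by rw [hMdef]; ring
  -- x is V-Lipschitz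
  have hxdist : ∀ s ∈ Set.Icc t (t+h), ‖x s - x t‖ ≤ V * h := by
    intro s hs
    have := Convex.norm_image_sub_le_of_norm_hasDerivWithin_le hx' hVb' (convex_Icc t (t+h)) htmem hs
    have hst : ‖s - t‖ ≤ h := by
      rw [Real.norm_eq_abs, abs_of_nonneg (by linarith [hs.1])]
      linarith [hs.2]
    calc ‖x s - x t‖ ≤ V * ‖s - t‖ := this
      _ ≤ V * h := mul_le_mul_of_nonneg_left hst hV
  -- v is M-Lipschitz
  have hvdist : ∀ s ∈ Set.Icc t (t+h), ‖v s - v t‖ ≤ M * h := by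
    intro s hs
    have := Convex.norm_image_sub_le_of_norm_hasDerivWithin_le hv' hvderiv (convex_Icc t (t+h)) htmem hs
    have hst : ‖s - t‖ ≤ h := by
      rw [Real.norm_eq_abs, abs_of_nonneg (by linarith [hs.1])]
      linarith [hs.2]
    calc ‖v s - v t‖ ≤ M * ‖s - t‖ := this
      _ ≤ M * h := mul_le_mul_of_nonneg_left hst hM0
  -- relation from the implicit equation
  have e1 : xh = xhat - (h ^ 2) • gradient w xhat - (h ^ 2) • gradient g xh := by
    rw [← hxh]; abel
  -- distance from x s to xh
  have hxhb : ∀ s ∈ Set.Icc t (t+h), ‖x s - xh‖ ≤ K * h := by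
    intro s hs
    have h1 : ‖x s - x t‖ ≤ V * h := hxdist s hs
    have h2 : ‖x t - xhat‖ ≤ (1 + r) * V * h := by
      have heq : x t - xhat = -((h * (1 - r * h)) • v t) := by rw [hxhatdef]; abel
      rw [heq, norm_neg, norm_smul, Real.norm_eq_abs]
      have habs : |h * (1 - r * h)| ≤ h * (1 + r) := by
        rw [abs_mul, abs_of_pos hh0]
        have h7 : |1 - r * h| ≤ 1 + r := by
          rw [abs_le]
          constructor <;> nlinarith [mul_nonneg hr.le hh0.le]
        nlinarith
      have hvt := hVb t ⟨le_rfl, by linarith⟩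
      nlinarith [norm_nonneg (v t), abs_nonneg (h * (1 - r * h))]
    have h3 : ‖xhat - xh‖ ≤ 2 * G * h := by
      have heq : xhat - xh = (h ^ 2) • gradient w xhat + (h ^ 2) • gradient g xh :=
        aux_e1 _ _ _ _ _ hxh
      rw [heq]
      have hh2 : (0:ℝ) ≤ h ^ 2 := sq_nonneg h
      have hhh : h ^ 2 ≤ h := by nlinarith
      calc ‖(h ^ 2) • gradient w xhat + (h ^ 2) • gradient g xh‖
          ≤ ‖(h ^ 2) • gradient w xhat‖ + ‖(h ^ 2) • gradient g xh‖ := norm_add_le _ _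
        _ = h ^ 2 * ‖gradient w xhat‖ + h ^ 2 * ‖gradient g xh‖ := by
            rw [norm_smul, norm_smul, Real.norm_eq_abs, abs_of_nonneg hh2]
        _ ≤ h * G + h * G := by
            have := hwG xhat; have := hgG xh
            have g1 : h ^ 2 * ‖gradient w xhat‖ ≤ h * G := by nlinarith [norm_nonneg (gradient w xhat)]
            have g2 : h ^ 2 * ‖gradient g xh‖ ≤ h * G := by nlinarith [norm_nonneg (gradient g xh)]
            linarith
        _ = 2 * G * h := by ring
    have heq : x s - xh = (x s - x t) + (x t - xhat) + (xhat - xh) := by abel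
    calc ‖x s - xh‖ = ‖(x s - x t) + (x t - xhat) + (xhat - xh)‖ := by rw [heq]
      _ ≤ ‖(x s - x t) + (x t - xhat)‖ + ‖xhat - xh‖ := norm_add_le _ _
      _ ≤ ‖x s - x t‖ + ‖x t - xhat‖ + ‖xhat - xh‖ := by linarith [norm_add_le (x s - x t) (x t - xhat)]
      _ ≤ V * h + (1 + r) * V * h + 2 * G * h := by linarith
      _ = K * h := by rw [hKdef]; ring
  -- bound on the gradient differences
  have hgrad : ∀ s ∈ Set.Icc t (t+h),
      ‖gradient g (x s) - gradient g xh‖ ≤ L' * (K * h) ∧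
      ‖gradient w (x s) - gradient w xh‖ ≤ L' * (K * h) := by
    intro s hs
    have hd := hxhb s hs
    have hnn : (0:ℝ) ≤ ‖x s - xh‖ := norm_nonneg _
    constructor
    · calc ‖gradient g (x s) - gradient g xh‖ ≤ L * ‖x s - xh‖ := hgL _ _
        _ ≤ L' * ‖x s - xh‖ := mul_le_mul_of_nonneg_right hLL' hnn
        _ ≤ L' * (K * h) := mul_le_mul_of_nonneg_left hd hL'
    · calc ‖gradient w (x s) - gradient w xh‖ ≤ L * ‖x s - xh‖ := hwL _ _
        _ ≤ L' * ‖x s - xh‖ := mul_le_mul_of_nonneg_right hLL' hnn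
        _ ≤ L' * (K * h) := mul_le_mul_of_nonneg_left hd hL'
  -- first-order estimate for x : f₁ s = x s - (s - t) • v t
  have d1 : ∀ s ∈ Set.Icc t (t+h), HasDerivWithinAt (fun s => x s - (s - t) • v t)
      (v s - v t) (Set.Icc t (t+h)) s := by
    intro s hs
    have := (hx' s hs).fun_sub
      (((hasDerivWithinAt_id s (Set.Icc t (t+h))).sub_const t).smul_const (v t))
    simpa using this
  have b1 : ∀ s ∈ Set.Icc t (t+h), ‖v s - v t‖ ≤ M * h := hvdist
  have hx1 : ‖(x (t+h) - ((t+h) - t) • v t) - (x t - (t - t) • v t)‖ ≤ M * h * h := by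
    have := Convex.norm_image_sub_le_of_norm_hasDerivWithin_le d1 b1 (convex_Icc t (t+h)) htmem hthmem
    have hn : ‖(t + h) - t‖ = h := by
      rw [Real.norm_eq_abs]; rw [show (t + h) - t = h by ring, abs_of_pos hh0]
    rw [hn] at this
    exact this
  -- first-order estimate for v : f₂ s = v s - (s - t) • A
  set A : EuclideanSpace ℝ (Fin n) := -(r • v t) - (gradient g xh + gradient w xh) with hAdef
  have d2 : ∀ s ∈ Set.Icc t (t+h), HasDerivWithinAt (fun s => v s - (s - t) • A)
      ((-(r • v s) - (gradient g (x s) + gradient w (x s))) - A) (Set.Icc t (t+h)) s := by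
    intro s hs
    have := (hv' s hs).fun_sub
      (((hasDerivWithinAt_id s (Set.Icc t (t+h))).sub_const t).smul_const A)
    simpa using this
  have b2 : ∀ s ∈ Set.Icc t (t+h),
      ‖(-(r • v s) - (gradient g (x s) + gradient w (x s))) - A‖ ≤ D * h := by
    intro s hs
    have heq : (-(r • v s) - (gradient g (x s) + gradient w (x s))) - A =
        -(r • (v s - v t)) - ((gradient g (x s) - gradient g xh)
          + (gradient w (x s) - gradient w xh)) := by
      rw [hAdef]; exact aux_d _ _ _ _ _ _ _
    rw [heq]
    have h1 : ‖-(r • (v s - v t))‖ = r * ‖v s - v t‖ := by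
      rw [norm_neg, norm_smul, Real.norm_eq_abs, abs_of_pos hr]
    have h2 := hvdist s hs
    have h3 := (hgrad s hs).1
    have h4 := (hgrad s hs).2
    calc ‖-(r • (v s - v t)) - ((gradient g (x s) - gradient g xh)
          + (gradient w (x s) - gradient w xh))‖
        ≤ ‖-(r • (v s - v t))‖ + ‖(gradient g (x s) - gradient g xh)
          + (gradient w (x s) - gradient w xh)‖ := norm_sub_le _ _
      _ ≤ r * ‖v s - v t‖ + (‖gradient g (x s) - gradient g xh‖
          + ‖gradient w (x s) - gradient w xh‖) := by
          rw [h1]; linarith [norm_add_le (gradient g (x s) - gradient g xh)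
            (gradient w (x s) - gradient w xh)]
      _ ≤ r * (M * h) + (L' * (K * h) + L' * (K * h)) := by
          have := mul_le_mul_of_nonneg_left h2 hr.le
          linarith
      _ = D * h := by rw [hDdef]; ring
  have hv1 : ‖(v (t+h) - ((t+h) - t) • A) - (v t - (t - t) • A)‖ ≤ D * h * h := by
    have := Convex.norm_image_sub_le_of_norm_hasDerivWithin_le d2 b2 (convex_Icc t (t+h)) htmem hthmem
    have hn : ‖(t + h) - t‖ = h := by
      rw [Real.norm_eq_abs]; rw [show (t + h) - t = h by ring, abs_of_pos hh0]
    rw [hn] at this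
    exact this
  -- the Tseng point equals xhat - h² (∇g xh + ∇w xh)
  have e2 : xh - (h ^ 2) • (gradient w xh - gradient w xhat) =
      xhat - (h ^ 2) • (gradient g xh + gradient w xh) :=
    aux_e2 _ _ _ _ _ _ hxh
  constructor
  · -- x-estimate
    rw [e2, hxhatdef, aux_x (x (t+h)) (x t) (v t) (gradient g xh) (gradient w xh) r h t]
    have hvt := hVb t ⟨le_rfl, by linarith⟩
    have g1 : ‖(r * h ^ 2) • v t‖ ≤ r * V * h ^ 2 := by
      rw [norm_smul, Real.norm_eq_abs, abs_of_nonneg (by positivity)]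
      have hm := mul_le_mul_of_nonneg_left hvt (mul_nonneg hr.le (sq_nonneg h))
      nlinarith [hm]
    have g2 : ‖(h ^ 2) • (gradient g xh + gradient w xh)‖ ≤ 2 * G * h ^ 2 := by
      rw [norm_smul, Real.norm_eq_abs, abs_of_nonneg (sq_nonneg h)]
      have := norm_add_le (gradient g xh) (gradient w xh)
      have := hgG xh; have := hwG xh
      nlinarith [sq_nonneg h]
    calc ‖((x (t+h) - ((t+h) - t) • v t) - (x t - (t - t) • v t)) + (r * h ^ 2) • v t
          + (h ^ 2) • (gradient g xh + gradient w xh)‖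
        ≤ ‖((x (t+h) - ((t+h) - t) • v t) - (x t - (t - t) • v t)) + (r * h ^ 2) • v t‖
          + ‖(h ^ 2) • (gradient g xh + gradient w xh)‖ := norm_add_le _ _
      _ ≤ ‖(x (t+h) - ((t+h) - t) • v t) - (x t - (t - t) • v t)‖ + ‖(r * h ^ 2) • v t‖
          + ‖(h ^ 2) • (gradient g xh + gradient w xh)‖ := by
          linarith [norm_add_le ((x (t+h) - ((t+h) - t) • v t) - (x t - (t - t) • v t))
            ((r * h ^ 2) • v t)]
      _ ≤ M * h * h + r * V * h ^ 2 + 2 * G * h ^ 2 := by linarith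
      _ ≤ ((M + r * V + 2 * G) + D + 1) * h ^ 2 := by nlinarith [sq_nonneg h, mul_nonneg hD0 (sq_nonneg h)]
  · -- v-estimate
    rw [e2, hxhatdef]
    have hsm : ((x t + (h * (1 - r * h)) • v t) - (h ^ 2) • (gradient g xh + gradient w xh))
        - x t = h • (v t + h • A) := by
      rw [hAdef]; exact aux_v1 _ _ _ _ _ _
    rw [hsm, smul_smul, one_div, inv_mul_cancel₀ (ne_of_gt hh0), one_smul]
    rw [aux_v2 (v (t+h)) (v t) A h t]
    calc ‖(v (t+h) - ((t+h) - t) • A) - (v t - (t - t) • A)‖ ≤ D * h * h := hv1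
      _ ≤ ((M + r * V + 2 * G) + D + 1) * h ^ 2 := by nlinarith [sq_nonneg h]
end

section
/- Let r ≥ 3 and let f, g, w : ℝⁿ → ℝ be differentiable, with each of ∇f, ∇g, ∇w L-Lipschitz and bounded in norm by G. Let t > 0, h₀ ∈ (0,1], V ≥ 0, and let x, v : ℝ → ℝⁿ be differentiable on [t, t+h₀] with x′(s) = v(s), v′(s) = −(r/s) v(s) − (∇f + ∇g + ∇w)(x(s)), and ‖v(s)‖ ≤ V for all s ∈ [t, t+h₀] (a solution of the accelerated gradient flow with decaying damping r/t). Then there exists a constant C > 0 such that for every h ∈ (0, h₀] the following holds: with λ := h², x̂ := x(t) + h·( t/(t + rh) )·v(t), and the Davis–Yin step from x̂, namely x¼ with x¼ + λ∇f(x¼) = x̂, x½ := 2x¼ − x̂, x¾ with x¾ + λ∇g(x¾) = x½ − λ∇w(x¼), x⁺ := x̂ + x¾ − x¼, and v⁺ := (x⁺ − x(t))/h, one has ‖x(t+h) − x⁺‖ ≤ C h² and ‖v(t+h) − v⁺‖ ≤ C h². (Hence the accelerated Davis–Yin method with Nesterov-type decaying damping is a first-order integrator of the accelerated gradient flow ẍ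 + (r/t)ẋ = −∇(f+g+w)(x); note that at time t = kh the momentum coefficient k/(k+r) equals t/(t+rh).) -/
set_option maxHeartbeats 1000000

/-- Taylor / mean value helper: if `u` has derivative `u'` within `[a,b]` and
`‖u' s - c‖ ≤ C` on `[a,b]`, then `‖u b - u a - (b-a) • c‖ ≤ C * (b-a)`. -/
lemma taylor_aux {E : Type*} [NormedAddCommGroup E] [NormedSpace ℝ E]
    {u u' : ℝ → E} {a b : ℝ} {c : E} {C : ℝ} (hab : a ≤ b)
    (hu : ∀ s ∈ Set.Icc a b, HasDerivWithinAt u (u' s) (Set.Icc a b) s)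
    (hb : ∀ s ∈ Set.Icc a b, ‖u' s - c‖ ≤ C) :
    ‖u b - u a - (b - a) • c‖ ≤ C * (b - a) := by
  have key := (convex_Icc a b).norm_image_sub_le_of_norm_hasDerivWithin_le
    (f := fun s => u s - s • c) (f' := fun s => u' s - c)
    (fun s hs => (hu s hs).sub (by simpa using (hasDerivWithinAt_id s (Set.Icc a b)).smul_const c))
    hb ⟨le_rfl, hab⟩ ⟨hab, le_rfl⟩
  have e : (u b - b • c) - (u a - a • c) = u b - u a - (b - a) • c := by
    rw [sub_smul]; abel
  rw [e] at key
  rwa [Real.norm_eq_abs, abs_of_nonneg (sub_nonneg.2 hab)] at key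

/-- The accelerated Davis-Yin method with Nesterov-type decaying
damping `r/t` (momentum coefficient `t/(t+rh)`) is a first-order integrator of the
accelerated gradient flow `ẍ + (r/t)ẋ = -∇(f+g+w)(x)`. -/
theorem stmt_15 {n : ℕ} (r : ℝ) (hr : 3 ≤ r)
    (f g w : EuclideanSpace ℝ (Fin n) → ℝ)
    (hfd : Differentiable ℝ f) (hgd : Differentiable ℝ g) (hwd : Differentiable ℝ w)
    (L G : ℝ)
    (hfL : ∀ u v : EuclideanSpace ℝ (Fin n), ‖gradient f u - gradient f v‖ ≤ L * ‖u - v‖)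
    (hgL : ∀ u v : EuclideanSpace ℝ (Fin n), ‖gradient g u - gradient g v‖ ≤ L * ‖u - v‖)
    (hwL : ∀ u v : EuclideanSpace ℝ (Fin n), ‖gradient w u - gradient w v‖ ≤ L * ‖u - v‖)
    (hfG : ∀ u, ‖gradient f u‖ ≤ G)
    (hgG : ∀ u, ‖gradient g u‖ ≤ G)
    (hwG : ∀ u, ‖gradient w u‖ ≤ G)
    (t : ℝ) (ht : 0 < t) (h₀ : ℝ) (hh₀ : h₀ ∈ Set.Ioc (0 : ℝ) 1) (V : ℝ) (hV : 0 ≤ V)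
    (x v : ℝ → EuclideanSpace ℝ (Fin n))
    (hx : ∀ s ∈ Set.Icc t (t + h₀),
      HasDerivWithinAt x (v s) (Set.Icc t (t + h₀)) s)
    (hv : ∀ s ∈ Set.Icc t (t + h₀), HasDerivWithinAt v
      (-((r / s) • v s) - (gradient f (x s) + gradient g (x s) + gradient w (x s)))
      (Set.Icc t (t + h₀)) s)
    (hVb : ∀ s ∈ Set.Icc t (t + h₀), ‖v s‖ ≤ V) :
    ∃ C > 0, ∀ h : ℝ, 0 < h → h ≤ h₀ →
      ∀ xq xt : EuclideanSpace ℝ (Fin n),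
        xq + (h ^ 2) • gradient f xq = x t + (h * (t / (t + r * h))) • v t →
        xt + (h ^ 2) • gradient g xt =
          (((2 : ℝ) • xq - (x t + (h * (t / (t + r * h))) • v t))
            - (h ^ 2) • gradient w xq) →
        ‖x (t + h) - ((x t + (h * (t / (t + r * h))) • v t) + xt - xq)‖ ≤ C * h ^ 2 ∧
        ‖v (t + h) - (1 / h) • ((((x t + (h * (t / (t + r * h))) • v t) + xt - xq))
            - x t)‖ ≤ C * h ^ 2 := by
  obtain ⟨hh0pos, hh0le⟩ := hh₀
  have hG : 0 ≤ G := le_trans (norm_nonneg _) (hfG 0)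
  set L' : ℝ := max L 0 with hL'def
  have hL'0 : 0 ≤ L' := le_max_right _ _
  have hfL' : ∀ u v' : EuclideanSpace ℝ (Fin n),
      ‖gradient f u - gradient f v'‖ ≤ L' * ‖u - v'‖ := fun u v' =>
    (hfL u v').trans (mul_le_mul_of_nonneg_right (le_max_left _ _) (norm_nonneg _))
  have hgL' : ∀ u v' : EuclideanSpace ℝ (Fin n),
      ‖gradient g u - gradient g v'‖ ≤ L' * ‖u - v'‖ := fun u v' =>
    (hgL u v').trans (mul_le_mul_of_nonneg_right (le_max_left _ _) (norm_nonneg _))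
  have hwL' : ∀ u v' : EuclideanSpace ℝ (Fin n),
      ‖gradient w u - gradient w v'‖ ≤ L' * ‖u - v'‖ := fun u v' =>
    (hwL u v').trans (mul_le_mul_of_nonneg_right (le_max_left _ _) (norm_nonneg _))
  have hr0 : (0:ℝ) < r := by linarith
  set M : ℝ := r / t * V + 3 * G with hMdef
  have hM0 : 0 ≤ M := by positivity
  -- bound on derivative of v
  have hvb : ∀ s ∈ Set.Icc t (t + h₀),
      ‖-((r / s) • v s) - (gradient f (x s) + gradient g (x s) + gradient w (x s))‖ ≤ M := by
    intro s hs
    have hspos : 0 < s := lt_of_lt_of_le ht hs.1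
    have h1 : ‖(r / s) • v s‖ ≤ r / t * V := by
      rw [norm_smul, Real.norm_eq_abs, abs_of_pos (div_pos hr0 hspos)]
      have hrs : r / s ≤ r / t := by gcongr; exact hs.1
      exact mul_le_mul hrs (hVb s hs) (norm_nonneg _) (by positivity)
    have h2 : ‖gradient f (x s) + gradient g (x s) + gradient w (x s)‖ ≤ 3 * G := by
      calc ‖gradient f (x s) + gradient g (x s) + gradient w (x s)‖
          ≤ ‖gradient f (x s) + gradient g (x s)‖ + ‖gradient w (x s)‖ := norm_add_le _ _
        _ ≤ (‖gradient f (x s)‖ + ‖gradient g (x s)‖) + ‖gradient w (x s)‖ := by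
            gcongr; exact norm_add_le _ _
        _ ≤ (G + G) + G := by gcongr <;> [exact hfG _; exact hgG _; exact hwG _]
        _ = 3 * G := by ring
    calc ‖-((r / s) • v s) - (gradient f (x s) + gradient g (x s) + gradient w (x s))‖
        ≤ ‖-((r / s) • v s)‖ + ‖gradient f (x s) + gradient g (x s) + gradient w (x s)‖ :=
          norm_sub_le _ _
      _ ≤ r / t * V + 3 * G := by rw [norm_neg]; exact add_le_add h1 h2
  -- Lipschitz bounds for v and x
  have hvlip : ∀ s ∈ Set.Icc t (t + h₀), ‖v s - v t‖ ≤ M * (s - t) := by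
    intro s hs
    have key := (convex_Icc t (t + h₀)).norm_image_sub_le_of_norm_hasDerivWithin_le
      hv hvb ⟨le_rfl, by linarith⟩ hs
    rwa [Real.norm_eq_abs, abs_of_nonneg (sub_nonneg.2 hs.1)] at key
  have hxlip : ∀ s ∈ Set.Icc t (t + h₀), ‖x s - x t‖ ≤ V * (s - t) := by
    intro s hs
    have key := (convex_Icc t (t + h₀)).norm_image_sub_le_of_norm_hasDerivWithin_le
      hx hVb ⟨le_rfl, by linarith⟩ hs
    rwa [Real.norm_eq_abs, abs_of_nonneg (sub_nonneg.2 hs.1)] at key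
  set K : ℝ := r / t * M + r / t ^ 2 * V + 3 * L' * V with hKdef
  have hK0 : 0 ≤ K := by positivity
  clear_value L' M K
  refine ⟨1 + (M + r * V / t + 3 * G) + (K + r ^ 2 * V / t ^ 2 + L' * (3 * V + 6 * G)),
    by
      have p1 : (0:ℝ) ≤ r * V / t := by positivity
      have p2 : (0:ℝ) ≤ r ^ 2 * V / t ^ 2 := by positivity
      have p3 : (0:ℝ) ≤ L' * (3 * V + 6 * G) := mul_nonneg hL'0 (by linarith)
      linarith, ?_⟩
  intro h hh hhle xq xt hxq hxt
  have hh1 : h ≤ 1 := hhle.trans hh0le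
  have hmem : t + h ∈ Set.Icc t (t + h₀) := ⟨by linarith, by linarith⟩
  have htm : t ∈ Set.Icc t (t + h₀) := ⟨le_rfl, by linarith⟩
  have hsub : Set.Icc t (t + h) ⊆ Set.Icc t (t + h₀) := Set.Icc_subset_Icc le_rfl (by linarith)
  have htrh : 0 < t + r * h := by positivity
  set γ : ℝ := t / (t + r * h) with hγdef
  have hγ0 : 0 ≤ γ := by positivity
  have hγ1 : γ ≤ 1 := by rw [hγdef, div_le_one htrh]; nlinarith
  -- first-order Taylor bound for x on [t, t+h]
  have hx1 : ‖x (t + h) - x t - h • v t‖ ≤ M * h * h := by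
    have key := taylor_aux (u := x) (u' := v) (a := t) (b := t + h) (c := v t)
      (C := M * h) (by linarith)
      (fun s hs => (hx s (hsub hs)).mono hsub)
      (fun s hs => (hvlip s (hsub hs)).trans
        (mul_le_mul_of_nonneg_left (by linarith [hs.2]) hM0))
    simpa using key
  -- Lipschitz-type bound for the derivative of v on [t, t+h]
  have hvdlip : ∀ s ∈ Set.Icc t (t + h),
      ‖(-((r / s) • v s) - (gradient f (x s) + gradient g (x s) + gradient w (x s)))
        - (-((r / t) • v t) - (gradient f (x t) + gradient g (x t) + gradient w (x t)))‖
        ≤ K * h := by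
    intro s hs
    have hs' := hsub hs
    have hspos : 0 < s := lt_of_lt_of_le ht hs'.1
    have hst : s - t ≤ h := by linarith [hs.2]
    have e : (-((r / s) • v s) - (gradient f (x s) + gradient g (x s) + gradient w (x s)))
        - (-((r / t) • v t) - (gradient f (x t) + gradient g (x t) + gradient w (x t)))
        = (-((r / s) • (v s - v t)) + (r / t - r / s) • v t)
          + ((gradient f (x t) - gradient f (x s)) + (gradient g (x t) - gradient g (x s))
            + (gradient w (x t) - gradient w (x s))) := by
      rw [sub_smul, smul_sub]; abel
    rw [e]
    have b1 : ‖(r / s) • (v s - v t)‖ ≤ r / t * (M * h) := by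
      rw [norm_smul, Real.norm_eq_abs, abs_of_pos (div_pos hr0 hspos)]
      have hrs : r / s ≤ r / t := by gcongr; exact hs'.1
      have hvst : ‖v s - v t‖ ≤ M * h :=
        (hvlip s hs').trans (mul_le_mul_of_nonneg_left hst hM0)
      exact mul_le_mul hrs hvst (norm_nonneg _) (by positivity)
    have b2 : ‖(r / t - r / s) • v t‖ ≤ r / t ^ 2 * h * V := by
      rw [norm_smul, Real.norm_eq_abs]
      have e2 : r / t - r / s = r * (s - t) / (t * s) := by
        field_simp
      have habs : |r / t - r / s| ≤ r / t ^ 2 * h := by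
        rw [e2, abs_of_nonneg (div_nonneg (mul_nonneg hr0.le (sub_nonneg.2 hs'.1)) (by positivity))]
        have key : r * (s - t) / (t * s) ≤ r * h / (t * t) :=
          div_le_div₀ (by positivity)
            (mul_le_mul_of_nonneg_left hst hr0.le) (by positivity)
            (mul_le_mul_of_nonneg_left hs'.1 ht.le)
        calc r * (s - t) / (t * s) ≤ r * h / (t * t) := key
          _ = r / t ^ 2 * h := by field_simp
      calc |r / t - r / s| * ‖v t‖ ≤ (r / t ^ 2 * h) * V :=
        mul_le_mul habs (hVb t htm) (norm_nonneg _) (by positivity)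
        _ = r / t ^ 2 * h * V := by ring
    have bx : ‖x s - x t‖ ≤ V * h := (hxlip s hs').trans
      (mul_le_mul_of_nonneg_left hst hV)
    have b3 : ‖gradient f (x t) - gradient f (x s)‖ ≤ L' * (V * h) :=
      (hfL' _ _).trans (by
        have : ‖x t - x s‖ = ‖x s - x t‖ := norm_sub_rev _ _
        rw [this]; exact mul_le_mul_of_nonneg_left bx hL'0)
    have b4 : ‖gradient g (x t) - gradient g (x s)‖ ≤ L' * (V * h) :=
      (hgL' _ _).trans (by
        rw [norm_sub_rev (x t)]; exact mul_le_mul_of_nonneg_left bx hL'0)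
    have b5 : ‖gradient w (x t) - gradient w (x s)‖ ≤ L' * (V * h) :=
      (hwL' _ _).trans (by
        rw [norm_sub_rev (x t)]; exact mul_le_mul_of_nonneg_left bx hL'0)
    calc ‖(-((r / s) • (v s - v t)) + (r / t - r / s) • v t)
          + ((gradient f (x t) - gradient f (x s)) + (gradient g (x t) - gradient g (x s))
            + (gradient w (x t) - gradient w (x s)))‖
        ≤ ‖-((r / s) • (v s - v t)) + (r / t - r / s) • v t‖
          + ‖(gradient f (x t) - gradient f (x s)) + (gradient g (x t) - gradient g (x s))
            + (gradient w (x t) - gradient w (x s))‖ := norm_add_le _ _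
      _ ≤ (‖-((r / s) • (v s - v t))‖ + ‖(r / t - r / s) • v t‖)
          + ((‖gradient f (x t) - gradient f (x s)‖ + ‖gradient g (x t) - gradient g (x s)‖)
            + ‖gradient w (x t) - gradient w (x s)‖) := by
          gcongr
          · exact norm_add_le _ _
          · exact (norm_add_le _ _).trans (by gcongr; exact norm_add_le _ _)
      _ ≤ (r / t * (M * h) + r / t ^ 2 * h * V) + ((L' * (V * h) + L' * (V * h)) + L' * (V * h)) := by
          rw [norm_neg]
          gcongr
      _ ≤ K * h := by rw [hKdef]; ring_nf; nlinarith [hL'0, hV, hh.le]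
  -- first-order Taylor bound for v on [t, t+h]
  have hv1 : ‖v (t + h) - v t - h •
      (-((r / t) • v t) - (gradient f (x t) + gradient g (x t) + gradient w (x t)))‖
      ≤ K * h * h := by
    have key := taylor_aux (u := v)
      (u' := fun s => -((r / s) • v s) -
        (gradient f (x s) + gradient g (x s) + gradient w (x s)))
      (a := t) (b := t + h)
      (c := -((r / t) • v t) - (gradient f (x t) + gradient g (x t) + gradient w (x t)))
      (C := K * h) (by linarith)
      (fun s hs => (hv s (hsub hs)).mono hsub)
      hvdlip
    simpa using key
  -- algebraic identities for the Davis-Yin step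
  have e1 : xq = (x t + (h * γ) • v t) - h ^ 2 • gradient f xq := eq_sub_of_add_eq hxq
  have e2 : xt - xq = -(h ^ 2 • (gradient f xq + gradient w xq + gradient g xt)) := by
    linear_combination (norm := module) hxt + hxq
  have hS : ‖gradient f xq + gradient w xq + gradient g xt‖ ≤ 3 * G := by
    calc ‖gradient f xq + gradient w xq + gradient g xt‖
        ≤ ‖gradient f xq + gradient w xq‖ + ‖gradient g xt‖ := norm_add_le _ _
      _ ≤ (‖gradient f xq‖ + ‖gradient w xq‖) + ‖gradient g xt‖ := by
          gcongr; exact norm_add_le _ _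
      _ ≤ (G + G) + G := by gcongr <;> [exact hfG _; exact hwG _; exact hgG _]
      _ = 3 * G := by ring
  have hxtxq : ‖xt - xq‖ ≤ 3 * G * h ^ 2 := by
    rw [e2, norm_neg, norm_smul, Real.norm_eq_abs, abs_of_nonneg (by positivity)]
    calc h ^ 2 * ‖gradient f xq + gradient w xq + gradient g xt‖
        ≤ h ^ 2 * (3 * G) := by gcongr
      _ = 3 * G * h ^ 2 := by ring
  have hxqX : ‖xq - x t‖ ≤ (V + G) * h := by
    have e : xq - x t = (h * γ) • v t - h ^ 2 • gradient f xq := by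
      linear_combination (norm := module) hxq
    rw [e]
    calc ‖(h * γ) • v t - h ^ 2 • gradient f xq‖
        ≤ ‖(h * γ) • v t‖ + ‖h ^ 2 • gradient f xq‖ := norm_sub_le _ _
      _ = |h * γ| * ‖v t‖ + |h ^ 2| * ‖gradient f xq‖ := by
          rw [norm_smul, norm_smul, Real.norm_eq_abs, Real.norm_eq_abs]
      _ ≤ (h * 1) * V + (h * 1) * G := by
          rw [abs_of_nonneg (by positivity), abs_of_nonneg (by positivity)]
          gcongr
          · exact hVb t htm
          · nlinarith
          · exact hfG _
      _ = (V + G) * h := by ring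
  have hxtX : ‖xt - x t‖ ≤ (V + 4 * G) * h := by
    calc ‖xt - x t‖ = ‖(xt - xq) + (xq - x t)‖ := by congr 1; abel
      _ ≤ ‖xt - xq‖ + ‖xq - x t‖ := norm_add_le _ _
      _ ≤ 3 * G * h ^ 2 + (V + G) * h := add_le_add hxtxq hxqX
      _ ≤ (V + 4 * G) * h := by
          have hh2 : h ^ 2 ≤ h := by nlinarith
          nlinarith [mul_nonneg hG (sub_nonneg.2 hh2)]
  constructor
  · -- position bound
    have key : x (t + h) - ((x t + (h * γ) • v t) + xt - xq)
        = (x (t + h) - x t - h • v t) + ((h - h * γ) • v t) - (xt - xq) := by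
      rw [sub_smul]; abel
    rw [key]
    have bγ : ‖(h - h * γ) • v t‖ ≤ r * V / t * h ^ 2 := by
      rw [norm_smul, Real.norm_eq_abs]
      have e : h - h * γ = h * (r * h) / (t + r * h) := by
        rw [hγdef]; field_simp; ring
      have habs : |h - h * γ| ≤ r / t * h ^ 2 := by
        rw [e, abs_of_nonneg (by positivity), div_le_iff₀ htrh]
        have h1 : r / t * h ^ 2 * t = r * h ^ 2 := by field_simp
        nlinarith [h1, mul_nonneg (mul_nonneg (div_nonneg hr0.le ht.le) (sq_nonneg h))
          (mul_nonneg hr0.le hh.le)]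
      calc |h - h * γ| * ‖v t‖ ≤ (r / t * h ^ 2) * V :=
            mul_le_mul habs (hVb t htm) (norm_nonneg _) (by positivity)
        _ = r * V / t * h ^ 2 := by ring
    calc ‖(x (t + h) - x t - h • v t) + ((h - h * γ) • v t) - (xt - xq)‖
        ≤ ‖(x (t + h) - x t - h • v t) + ((h - h * γ) • v t)‖ + ‖xt - xq‖ := norm_sub_le _ _
      _ ≤ (‖x (t + h) - x t - h • v t‖ + ‖(h - h * γ) • v t‖) + ‖xt - xq‖ := by
          gcongr; exact norm_add_le _ _
      _ ≤ (M * h * h + r * V / t * h ^ 2) + 3 * G * h ^ 2 :=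
          add_le_add (add_le_add hx1 bγ) hxtxq
      _ = (M + r * V / t + 3 * G) * h ^ 2 := by ring
      _ ≤ (1 + (M + r * V / t + 3 * G) + (K + r ^ 2 * V / t ^ 2 + L' * (3 * V + 6 * G))) * h ^ 2 := by
          have hpos : (0:ℝ) ≤ h ^ 2 := by positivity
          have h4 : (0:ℝ) ≤ r ^ 2 * V / t ^ 2 := by positivity
          have h5 : (0:ℝ) ≤ L' * (3 * V + 6 * G) := mul_nonneg hL'0 (by linarith)
          have hle : M + r * V / t + 3 * G
              ≤ 1 + (M + r * V / t + 3 * G) + (K + r ^ 2 * V / t ^ 2 + L' * (3 * V + 6 * G)) := by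
            linarith [hK0, h4, h5]
          exact mul_le_mul_of_nonneg_right hle hpos
  · -- velocity bound
    have hv2 : (1 / h) • (((x t + (h * γ) • v t) + xt - xq) - x t)
        = γ • v t - h • (gradient f xq + gradient w xq + gradient g xt) := by
      have expand : ((x t + (h * γ) • v t) + xt - xq) - x t
          = (h * γ) • v t - h ^ 2 • (gradient f xq + gradient w xq + gradient g xt) := by
        have : (x t + (h * γ) • v t) + xt - xq - x t = (h * γ) • v t + (xt - xq) := by abel
        rw [this, e2]; abel
      rw [expand, smul_sub, smul_smul, smul_smul]
      congr 1
      · congr 1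
        field_simp
      · congr 1
        field_simp
    rw [hv2]
    have key : v (t + h) - (γ • v t - h • (gradient f xq + gradient w xq + gradient g xt))
        = (v (t + h) - v t - h •
            (-((r / t) • v t) - (gradient f (x t) + gradient g (x t) + gradient w (x t))))
          + ((1 - γ - h * (r / t)) • v t)
          + h • (gradient f xq - gradient f (x t))
          + h • (gradient g xt - gradient g (x t))
          + h • (gradient w xq - gradient w (x t)) := by
      simp only [sub_smul, one_smul, smul_sub, smul_add, smul_neg, smul_smul]
      module
    rw [key]
    have bγ2 : ‖(1 - γ - h * (r / t)) • v t‖ ≤ r ^ 2 * V / t ^ 2 * h ^ 2 := by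
      rw [norm_smul, Real.norm_eq_abs]
      have e : 1 - γ - h * (r / t) = -(r ^ 2 * h ^ 2 / (t * (t + r * h))) := by
        rw [hγdef]; field_simp; ring
      have habs : |1 - γ - h * (r / t)| ≤ r ^ 2 / t ^ 2 * h ^ 2 := by
        rw [e, abs_neg, abs_of_nonneg (by positivity), div_le_iff₀ (by positivity)]
        have h2 : r ^ 2 / t ^ 2 * h ^ 2 * (t * (t + r * h))
            = r ^ 2 * h ^ 2 * ((t + r * h) / t) := by field_simp
        rw [h2]
        have h3 : (1:ℝ) ≤ (t + r * h) / t := by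
          rw [le_div_iff₀ ht]; nlinarith
        have h4 := mul_le_mul_of_nonneg_left h3 (by positivity : (0:ℝ) ≤ r ^ 2 * h ^ 2)
        linarith
      calc |1 - γ - h * (r / t)| * ‖v t‖ ≤ (r ^ 2 / t ^ 2 * h ^ 2) * V :=
            mul_le_mul habs (hVb t htm) (norm_nonneg _) (by positivity)
        _ = r ^ 2 * V / t ^ 2 * h ^ 2 := by ring
    have bf : ‖h • (gradient f xq - gradient f (x t))‖ ≤ L' * (V + G) * h ^ 2 := by
      rw [norm_smul, Real.norm_eq_abs, abs_of_pos hh]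
      calc h * ‖gradient f xq - gradient f (x t)‖
          ≤ h * (L' * ((V + G) * h)) := by
            gcongr
            exact (hfL' _ _).trans (mul_le_mul_of_nonneg_left hxqX hL'0)
        _ = L' * (V + G) * h ^ 2 := by ring
    have bg : ‖h • (gradient g xt - gradient g (x t))‖ ≤ L' * (V + 4 * G) * h ^ 2 := by
      rw [norm_smul, Real.norm_eq_abs, abs_of_pos hh]
      calc h * ‖gradient g xt - gradient g (x t)‖
          ≤ h * (L' * ((V + 4 * G) * h)) := by
            gcongr
            exact (hgL' _ _).trans (mul_le_mul_of_nonneg_left hxtX hL'0)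
        _ = L' * (V + 4 * G) * h ^ 2 := by ring
    have bw : ‖h • (gradient w xq - gradient w (x t))‖ ≤ L' * (V + G) * h ^ 2 := by
      rw [norm_smul, Real.norm_eq_abs, abs_of_pos hh]
      calc h * ‖gradient w xq - gradient w (x t)‖
          ≤ h * (L' * ((V + G) * h)) := by
            gcongr
            exact (hwL' _ _).trans (mul_le_mul_of_nonneg_left hxqX hL'0)
        _ = L' * (V + G) * h ^ 2 := by ring
    set A := v (t + h) - v t - h •
        (-((r / t) • v t) - (gradient f (x t) + gradient g (x t) + gradient w (x t))) with hA
    calc ‖A + ((1 - γ - h * (r / t)) • v t) + h • (gradient f xq - gradient f (x t))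
          + h • (gradient g xt - gradient g (x t)) + h • (gradient w xq - gradient w (x t))‖
        ≤ ‖A‖ + ‖(1 - γ - h * (r / t)) • v t‖ + ‖h • (gradient f xq - gradient f (x t))‖
          + ‖h • (gradient g xt - gradient g (x t))‖
          + ‖h • (gradient w xq - gradient w (x t))‖ := by
          refine (norm_add_le _ _).trans ?_
          gcongr
          refine (norm_add_le _ _).trans ?_
          gcongr
          refine (norm_add_le _ _).trans ?_
          gcongr
          exact norm_add_le _ _
      _ ≤ K * h * h + r ^ 2 * V / t ^ 2 * h ^ 2 + L' * (V + G) * h ^ 2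
          + L' * (V + 4 * G) * h ^ 2 + L' * (V + G) * h ^ 2 :=
          add_le_add (add_le_add (add_le_add (add_le_add hv1 bγ2) bf) bg) bw
      _ = (K + r ^ 2 * V / t ^ 2 + L' * (3 * V + 6 * G)) * h ^ 2 := by ring
      _ ≤ (1 + (M + r * V / t + 3 * G) + (K + r ^ 2 * V / t ^ 2 + L' * (3 * V + 6 * G))) * h ^ 2 := by
          have hpos : (0:ℝ) ≤ h ^ 2 := by positivity
          have h1 : (0:ℝ) ≤ M + r * V / t + 3 * G := by
            have : (0:ℝ) ≤ r * V / t := by positivity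
            linarith
          have hle : K + r ^ 2 * V / t ^ 2 + L' * (3 * V + 6 * G)
              ≤ 1 + (M + r * V / t + 3 * G) + (K + r ^ 2 * V / t ^ 2 + L' * (3 * V + 6 * G)) := by
            linarith
          exact mul_le_mul_of_nonneg_right hle hpos
end
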